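/- arXiv:1101.2815 — 3 statements merged into one kernel-verified Lean document; each statement's English description precedes it below -/
import Mathlib

section
/- Null-set transfer under the density hypothesis: Assume (HD). Let A ∈ F_T⊗B(Δ_n)⊗B(E^n) be a set such that for every (θ,e) ∈ Δ_n×E^n one has 1_A(·, θ, e)·γ_T(θ, e) = 0 P-almost surely. Then P({ω ∈ Ω : (ω, τ_1(ω),…,τ_n(ω), ζ_1(ω),…,ζ_n(ω)) ∈ A}) = 0. -/
open MeasureTheory Set

noncomputable section

namespace PaperBSDEJumps

variable {Ω : Type*}

/-- The predictable σ-algebra `𝒫(F)` on `ℝ × Ω`: the σ-algebra generated by the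
left-continuous `F`-adapted real-valued processes. -/
def predSigma (F : ℝ → MeasurableSpace Ω) : MeasurableSpace (ℝ × Ω) :=
  ⨆ X : {X : ℝ × Ω → ℝ //
      (∀ ω : Ω, ∀ t : ℝ, ContinuousWithinAt (fun s => X (s, ω)) (Set.Iic t) t) ∧
      ∀ t : ℝ, Measurable[F t] fun ω => X (t, ω)},
    MeasurableSpace.comap X.1 inferInstance

/-- The progressive σ-algebra `𝒫ℳ(F)` on `ℝ × Ω`: a set is progressively measurable iff for
every `s ≥ 0` its restriction to `[0,s] × Ω` is `B([0,s]) ⊗ F_s`-measurable. -/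
def progSigma (F : ℝ → MeasurableSpace Ω) : MeasurableSpace (ℝ × Ω) :=
  ⨅ s : ℝ, MeasurableSpace.map (fun p : Set.Icc (0 : ℝ) s × Ω => ((p.1 : ℝ), p.2))
    (MeasurableSpace.prod inferInstance (F s))

/-- `𝒫(F) ⊗ B(α)`-measurability for a parameterized process. -/
def PredParamMeas (F : ℝ → MeasurableSpace Ω) {α β : Type*} [mα : MeasurableSpace α]
    [MeasurableSpace β] (X : (ℝ × Ω) × α → β) : Prop :=
  Measurable[(predSigma F).prod mα] X

/-- `𝒫ℳ(F, α)`-measurability: for every `s`, the restriction of `X` to times in `[0,s]`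
is `B([0,s]) ⊗ F_s ⊗ B(α)`-measurable. -/
def ProgParamMeas (F : ℝ → MeasurableSpace Ω) {α β : Type*} [mα : MeasurableSpace α]
    [MeasurableSpace β] (X : (ℝ × Ω) × α → β) : Prop :=
  ∀ s : ℝ, Measurable[MeasurableSpace.prod
      (inferInstance : MeasurableSpace (Set.Icc (0 : ℝ) s))
      (MeasurableSpace.prod (F s) mα)]
    fun p : Set.Icc (0 : ℝ) s × Ω × α => X (((p.1 : ℝ), p.2.1), p.2.2)

/-- `G` is the progressive enlargement of the filtration `F` with the random times
`τ_1 ≤ … ≤ τ_n` and the marks `ζ_1, …, ζ_n`: the smallest right-continuous filtration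
containing `F` such that each `τ_k` is a `G`-stopping time and each `ζ_k` is
`G_{τ_k}`-measurable. -/
def IsProgEnlargement {Em : Type*} [MeasurableSpace Em]
    (F : ℝ → MeasurableSpace Ω) (n : ℕ) (τ : ℕ → Ω → ℝ) (ζ : ℕ → Ω → Em)
    (G : ℝ → MeasurableSpace Ω) : Prop :=
  Monotone G ∧ (∀ t, F t ≤ G t) ∧ (∀ t, G t = ⨅ s ∈ Set.Ioi t, G s) ∧
  (∀ k, 1 ≤ k → k ≤ n → ∀ t : ℝ, MeasurableSet[G t] {ω | τ k ω ≤ t}) ∧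
  (∀ k, 1 ≤ k → k ≤ n → ∀ B : Set Em, MeasurableSet B →
    ∀ t : ℝ, MeasurableSet[G t] ({ω | ζ k ω ∈ B} ∩ {ω | τ k ω ≤ t})) ∧
  ∀ G' : ℝ → MeasurableSpace Ω, Monotone G' → (∀ t, F t ≤ G' t) →
    (∀ t, G' t = ⨅ s ∈ Set.Ioi t, G' s) →
    (∀ k, 1 ≤ k → k ≤ n → ∀ t : ℝ, MeasurableSet[G' t] {ω | τ k ω ≤ t}) →
    (∀ k, 1 ≤ k → k ≤ n → ∀ B : Set Em, MeasurableSet B →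
      ∀ t : ℝ, MeasurableSet[G' t] ({ω | ζ k ω ∈ B} ∩ {ω | τ k ω ≤ t})) →
    ∀ t, G t ≤ G' t

/-- The reference measure `de` on a Borel subset `E ⊆ ℝ^m`: the restriction of the Lebesgue
measure to `E`, viewed as a measure on the subtype `↥E`. -/
def measE {mdim : ℕ} (E : Set (Fin mdim → ℝ)) : Measure ↥E :=
  (volume : Measure (Fin mdim → ℝ)).comap Subtype.val

/-- The measure `dθ_{k+1}…dθ_n de_{k+1}…de_n` on `ℝ^{n-k} × E^{n-k}`. -/
def prodFinMeas {mdim : ℕ} (E : Set (Fin mdim → ℝ)) (j : ℕ) :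
    Measure ((Fin j → ℝ) × (Fin j → ↥E)) :=
  (volume : Measure (Fin j → ℝ)).prod (Measure.pi fun _ => measE E)

/-- Concatenation of a `k`-vector with an `(n-k)`-vector into an `n`-vector. -/
def splice {α : Type*} {n k : ℕ} (θ : Fin k → α) (q : Fin (n - k) → α) : Fin n → α :=
  fun i => if h : (i : ℕ) < k then θ ⟨i, h⟩
    else q ⟨(i : ℕ) - k, by have := i.isLt; omega⟩

/-- The density hypothesis (HD): `γ` is a positive `𝒫(F) ⊗ B(Δ_n) ⊗ B(E^n)`-measurable map
such that `P[(τ_{(n)}, ζ_{(n)}) ∈ dθ de | F_t] = γ_t(θ, e) dθ de` for all `t ≥ 0`. -/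
def DensityHypothesis {mΩ : MeasurableSpace Ω} {mdim : ℕ} {E : Set (Fin mdim → ℝ)}
    (P : Measure Ω) (F : ℝ → MeasurableSpace Ω) {n : ℕ}
    (τ : ℕ → Ω → ℝ) (ζ : ℕ → Ω → ↥E)
    (γ : (ℝ × Ω) × ((Fin n → ℝ) × (Fin n → ↥E)) → ℝ) : Prop :=
  (∀ p, 0 < γ p) ∧
  Measurable[(predSigma F).prod inferInstance] γ ∧
  ∀ t : ℝ, 0 ≤ t → ∀ A : Set ((Fin n → ℝ) × (Fin n → ↥E)), MeasurableSet A →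
    P[(fun ω => A.indicator (fun _ => (1 : ℝ))
        (fun i => τ ((i : ℕ) + 1) ω, fun i => ζ ((i : ℕ) + 1) ω)) | F t]
      =ᵐ[P] fun ω => ∫ p in A, γ ((t, ω), p) ∂(prodFinMeas E n)

lemma prodSigma_mono {α β : Type*} {m₁ m₂ : MeasurableSpace α} (m : MeasurableSpace β)
    (h : m₁ ≤ m₂) : m₁.prod m ≤ m₂.prod m :=
  sup_le_sup (MeasurableSpace.comap_mono h) le_rfl

lemma sigmaFinite_measE {mdim : ℕ} {E : Set (Fin mdim → ℝ)} (hE : MeasurableSet E) :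
    SigmaFinite (measE E) := by
  have hemb : MeasurableEmbedding ((↑) : E → (Fin mdim → ℝ)) :=
    MeasurableEmbedding.subtype_coe hE
  refine ⟨⟨⟨fun k => Subtype.val ⁻¹' (spanningSets (volume : Measure (Fin mdim → ℝ)) k),
    fun _ => trivial, fun k => ?_, ?_⟩⟩⟩
  · rw [measE, hemb.comap_apply]
    exact lt_of_le_of_lt (measure_mono (Set.image_preimage_subset _ _))
      (measure_spanningSets_lt_top _ k)
  · rw [← Set.preimage_iUnion, iUnion_spanningSets, Set.preimage_univ]

lemma measurable_pairT (F : ℝ → MeasurableSpace Ω) (T : ℝ) :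
    @Measurable Ω (ℝ × Ω) (F T) (predSigma F) (fun ω => (T, ω)) := by
  rw [measurable_iff_comap_le, predSigma, MeasurableSpace.comap_iSup]
  refine iSup_le fun X => ?_
  rw [MeasurableSpace.comap_comp]
  exact measurable_iff_comap_le.mp (X.2.2 T)

/-- **Null-set transfer under the density hypothesis**: assume (HD). If
`A ∈ F_T ⊗ B(Δ_n) ⊗ B(E^n)` is such that for every `(θ, e)`,
`1_A(·, θ, e) γ_T(θ, e) = 0` `P`-a.s., then
`P({ω : (ω, τ_{(n)}(ω), ζ_{(n)}(ω)) ∈ A}) = 0`. -/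
theorem null_set_transfer
    {Ω : Type*} [mΩ : MeasurableSpace Ω] (P : Measure Ω) [IsProbabilityMeasure P]
    {mdim : ℕ} {E : Set (Fin mdim → ℝ)} (hE : MeasurableSet E)
    (F : ℝ → MeasurableSpace Ω) (hFmono : Monotone F) (hFle : ∀ t, F t ≤ mΩ)
    (n : ℕ) (hn : 1 ≤ n)
    (τ : ℕ → Ω → ℝ) (ζ : ℕ → Ω → ↥E)
    (hτm : ∀ k, Measurable (τ k)) (hτ0 : ∀ k ω, 0 ≤ τ k ω)
    (hτmono : ∀ k, 1 ≤ k → k < n → ∀ ω, τ k ω ≤ τ (k + 1) ω)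
    (hζm : ∀ k, Measurable (ζ k))
    (γ : (ℝ × Ω) × ((Fin n → ℝ) × (Fin n → ↥E)) → ℝ)
    (hγ : DensityHypothesis P F τ ζ γ)
    (T : ℝ) (hT : 0 < T)
    (A : Set (Ω × ((Fin n → ℝ) × (Fin n → ↥E))))
    (hA : MeasurableSet[(F T).prod inferInstance] A)
    (hnull : ∀ (θ : Fin n → ℝ) (e : Fin n → ↥E),
      ∀ᵐ ω ∂P, A.indicator (fun _ => (1 : ℝ)) (ω, (θ, e)) * γ ((T, ω), (θ, e)) = 0) :
    P {ω | (ω, ((fun i : Fin n => τ ((i : ℕ) + 1) ω), (fun i : Fin n => ζ ((i : ℕ) + 1) ω))) ∈ A} = 0 := by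
  classical
  haveI : SigmaFinite (measE E) := sigmaFinite_measE hE
  set μE : Measure ((Fin n → ℝ) × (Fin n → ↥E)) := prodFinMeas E n with hμE
  haveI : SFinite μE := by rw [hμE, prodFinMeas]; infer_instance
  set X : Ω → (Fin n → ℝ) × (Fin n → ↥E) :=
    fun ω => (fun i => τ ((i : ℕ) + 1) ω, fun i => ζ ((i : ℕ) + 1) ω) with hXdef
  have hX : Measurable X :=
    (measurable_pi_lambda _ fun i => hτm _).prodMk (measurable_pi_lambda _ fun i => hζm _)
  have hXpair : Measurable fun ω => (ω, X ω) := measurable_id.prodMk hX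
  haveI : SigmaFinite (P.trim (hFle T)) := by infer_instance
  -- measurability of the time-T slice of γ
  have hfst : @Measurable (Ω × ((Fin n → ℝ) × (Fin n → ↥E))) Ω
      ((F T).prod inferInstance) (F T) Prod.fst := @measurable_fst _ _ (F T) _
  have hsnd : @Measurable (Ω × ((Fin n → ℝ) × (Fin n → ↥E))) ((Fin n → ℝ) × (Fin n → ↥E))
      ((F T).prod inferInstance) inferInstance Prod.snd := @measurable_snd _ _ (F T) _
  have hι : @Measurable (Ω × ((Fin n → ℝ) × (Fin n → ↥E))) ((ℝ × Ω) × ((Fin n → ℝ) × (Fin n → ↥E)))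
      ((F T).prod inferInstance) ((predSigma F).prod inferInstance)
      (fun q => ((T, q.1), q.2)) :=
    Measurable.prodMk ((measurable_pairT F T).comp hfst) hsnd
  have hγT : Measurable fun q : Ω × ((Fin n → ℝ) × (Fin n → ↥E)) => γ ((T, q.1), q.2) :=
    Measurable.mono (hγ.2.1.comp hι) (prodSigma_mono _ (hFle T)) le_rfl
  set g : Ω × ((Fin n → ℝ) × (Fin n → ↥E)) → ENNReal :=
    fun q => ENNReal.ofReal (γ ((T, q.1), q.2)) with hgdef
  have hg : Measurable g := hγT.ennreal_ofReal
  -- a.e. integrability of γ_T(ω, ·) with total integral 1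
  have hDH := hγ.2.2 T hT.le
  have hint : ∀ᵐ ω ∂P, Integrable (fun p => γ ((T, ω), p)) μE ∧
      ∫ p, γ ((T, ω), p) ∂μE = 1 := by
    have h1 := hDH Set.univ MeasurableSet.univ
    have hconst : (fun ω => (Set.univ : Set ((Fin n → ℝ) × (Fin n → ↥E))).indicator
        (fun _ => (1 : ℝ)) (fun i => τ ((i : ℕ) + 1) ω, fun i => ζ ((i : ℕ) + 1) ω))
        = fun _ => (1 : ℝ) := by funext ω; simp
    rw [hconst] at h1
    have h2 := condExp_const (μ := P) (hFle T) (1 : ℝ)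
    have h3 : (fun _ => (1 : ℝ)) =ᵐ[P]
        fun ω => ∫ p in (Set.univ : Set ((Fin n → ℝ) × (Fin n → ↥E))), γ ((T, ω), p)
          ∂(prodFinMeas E n) := h2 ▸ h1
    filter_upwards [h3.symm] with ω hω
    rw [Measure.restrict_univ] at hω
    have hone : ∫ p, γ ((T, ω), p) ∂μE = 1 := hω
    refine ⟨?_, hone⟩
    by_contra hni
    rw [integral_undef hni] at hone
    exact one_ne_zero hone.symm
  -- rectangle identity
  have hrect : ∀ B : Set Ω, MeasurableSet[F T] B →
      ∀ C : Set ((Fin n → ℝ) × (Fin n → ↥E)), MeasurableSet C →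
      (P.map fun ω => (ω, X ω)) (B ×ˢ C) = ((P.prod μE).withDensity g) (B ×ˢ C) := by
    intro B hB C hC
    have hBm : MeasurableSet B := hFle T B hB
    have hXC : MeasurableSet (X ⁻¹' C) := hX hC
    rw [Measure.map_apply hXpair (hBm.prod hC)]
    have hpre : (fun ω => (ω, X ω)) ⁻¹' (B ×ˢ C) = B ∩ X ⁻¹' C := rfl
    rw [hpre, withDensity_apply _ (hBm.prod hC), ← Measure.prod_restrict,
      lintegral_prod _ hg.aemeasurable]
    set gC : Ω → ℝ := fun ω => ∫ p in C, γ ((T, ω), p) ∂μE with hgCdef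
    have hDHC := hDH C hC
    have hgC_int : Integrable gC P := integrable_condExp.congr hDHC
    have hgC_nn : ∀ ω, 0 ≤ gC ω := fun ω => integral_nonneg fun p => (hγ.1 _).le
    have hindeq : (fun ω => C.indicator (fun _ => (1 : ℝ))
        (fun i => τ ((i : ℕ) + 1) ω, fun i => ζ ((i : ℕ) + 1) ω))
        = (X ⁻¹' C).indicator fun _ => (1 : ℝ) := by
      funext ω
      simp only [Set.indicator_apply, Set.mem_preimage]
      rfl
    have hind_int : Integrable (fun ω => C.indicator (fun _ => (1 : ℝ))
        (fun i => τ ((i : ℕ) + 1) ω, fun i => ζ ((i : ℕ) + 1) ω)) P := by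
      rw [hindeq]; exact (integrable_const (1 : ℝ)).indicator hXC
    have stepA : ∀ᵐ ω ∂P,
        ∫⁻ p in C, g (ω, p) ∂μE = ENNReal.ofReal (gC ω) := by
      filter_upwards [hint] with ω hω
      exact (ofReal_integral_eq_lintegral_ofReal (hω.1.restrict)
        (Filter.Eventually.of_forall fun p => (hγ.1 _).le)).symm
    calc P (B ∩ X ⁻¹' C)
        = ENNReal.ofReal ((P (B ∩ X ⁻¹' C)).toReal) :=
          (ENNReal.ofReal_toReal (measure_ne_top P _)).symm
      _ = ENNReal.ofReal (∫ ω in B, gC ω ∂P) := by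
          congr 1
          have h1 : ∫ ω in B, gC ω ∂P
              = ∫ ω in B, (P[(fun ω => C.indicator (fun _ => (1 : ℝ))
                  (fun i => τ ((i : ℕ) + 1) ω, fun i => ζ ((i : ℕ) + 1) ω)) | F T]) ω ∂P :=
            integral_congr_ae (ae_restrict_of_ae hDHC.symm)
          rw [h1, setIntegral_condExp (hFle T) hind_int hB, hindeq,
            setIntegral_indicator hXC, setIntegral_const]
          simp [Measure.real]
      _ = ∫⁻ ω in B, ENNReal.ofReal (gC ω) ∂P :=
          ofReal_integral_eq_lintegral_ofReal hgC_int.restrict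
            (ae_restrict_of_ae (Filter.Eventually.of_forall hgC_nn))
      _ = ∫⁻ ω in B, ∫⁻ p in C, g (ω, p) ∂μE ∂P :=
          (lintegral_congr_ae (ae_restrict_of_ae stepA)).symm
  -- the two measures agree on (F T).prod
  have hle : (F T).prod (inferInstance : MeasurableSpace ((Fin n → ℝ) × (Fin n → ↥E)))
      ≤ Prod.instMeasurableSpace := prodSigma_mono _ (hFle T)
  haveI : IsProbabilityMeasure (P.map fun ω => (ω, X ω)) :=
    Measure.isProbabilityMeasure_map hXpair.aemeasurable
  have htrim : (P.map fun ω => (ω, X ω)).trim hle = ((P.prod μE).withDensity g).trim hle := by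
    refine @ext_of_generate_finite _ ((F T).prod inferInstance) _ _
      (image2 (· ×ˢ ·) {s | MeasurableSet[F T] s} {t | MeasurableSet t})
      (@generateFrom_prod Ω _ (F T) _).symm (@isPiSystem_prod Ω _ (F T) _) ?_ ?_ ?_
    · infer_instance
    · rintro s ⟨B, hB, C, hC, rfl⟩
      have hsm : MeasurableSet[(F T).prod inferInstance] (B ×ˢ C) :=
        @MeasurableSet.prod _ _ (F T) _ _ _ hB hC
      rw [trim_measurableSet_eq hle hsm, trim_measurableSet_eq hle hsm]
      exact hrect B hB C hC
    · have hsm : MeasurableSet[(F T).prod inferInstance]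
          (Set.univ : Set (Ω × ((Fin n → ℝ) × (Fin n → ↥E)))) := MeasurableSet.univ
      rw [trim_measurableSet_eq hle hsm, trim_measurableSet_eq hle hsm, ← Set.univ_prod_univ]
      exact hrect _ MeasurableSet.univ _ MeasurableSet.univ
  have hAmem : MeasurableSet A := hle A hA
  -- conclude
  have hmap : P {ω | (ω, X ω) ∈ A} = (P.map fun ω => (ω, X ω)) A := by
    rw [Measure.map_apply hXpair hAmem]; rfl
  have heqA : (P.map fun ω => (ω, X ω)) A = ((P.prod μE).withDensity g) A := by
    rw [← trim_measurableSet_eq hle hA, ← trim_measurableSet_eq hle hA, htrim]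
  have hzero : ((P.prod μE).withDensity g) A = 0 := by
    rw [withDensity_apply _ hAmem, ← lintegral_indicator hAmem g,
      lintegral_prod_symm' _ (hg.indicator hAmem)]
    have hinner : ∀ p : (Fin n → ℝ) × (Fin n → ↥E),
        ∫⁻ ω, A.indicator g (ω, p) ∂P = 0 := by
      intro p
      have h0 : (fun ω => A.indicator g (ω, p)) =ᵐ[P] 0 := by
        filter_upwards [hnull p.1 p.2] with ω hω
        by_cases hmem : (ω, p) ∈ A
        · exfalso
          have hγpos := hγ.1 ((T, ω), p)
          have : A.indicator (fun _ => (1 : ℝ)) (ω, p) = 1 := Set.indicator_of_mem hmem _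
          rw [show ((ω, (p.1, p.2)) : Ω × ((Fin n → ℝ) × (Fin n → ↥E))) = (ω, p) from rfl] at hω
          rw [this, one_mul] at hω
          exact absurd hω hγpos.ne'
        · simp [Set.indicator_of_notMem hmem]
      rw [lintegral_congr_ae h0]
      simp
    rw [lintegral_congr hinner, lintegral_zero]
  rw [show {ω | (ω, ((fun i : Fin n => τ ((i : ℕ) + 1) ω),
      (fun i : Fin n => ζ ((i : ℕ) + 1) ω))) ∈ A} = {ω | (ω, X ω) ∈ A} from rfl,
    hmap, heqA, hzero]


end PaperBSDEJumps
end
end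

section
/- Uniform bound transfer for decomposed processes (Step 3 of the proof of Theorem 3.1): Assume (HD). Let Y be defined on [0,T] by Y_t = Y^0_t·1_{t < τ_1} + Σ_{k=1}^n Y^k_t(τ_{(k)}, ζ_{(k)})·1_{τ_k ≤ t < τ_{k+1}}, where each Y^k is a càdlàg 𝒫ℳ(F,Δ_k,E^k)-measurable process. If M := sup over k ∈ {0,…,n} and (θ,e) ∈ Δ_n×E^n of ess sup_{t∈[θ_k∧T, T]} |Y^k_t(θ_{(k)}, e_{(k)})| is finite, then P-almost surely |Y_t| ≤ (n+1)M for all t ∈ [0,T]; in particular ‖Y‖_{S^∞[0,T]} := ess sup_{t∈[0,T]} |Y_t| ≤ (n+1)M. -/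
open MeasureTheory Set
open scoped ENNReal NNReal

noncomputable section

namespace PaperBSDEJumps

variable {Ω : Type*}

/-- The last coordinate `θ_k` of `θ ∈ Δ_k` (with the convention `θ_0 = 0`). -/
def lastOr0 : {k : ℕ} → (Fin k → ℝ) → ℝ
  | 0, _ => 0
  | k + 1, θ => θ (Fin.last k)

/-- The `S^∞[a, b]`-norm of a process: `ess sup_{t ∈ [a,b]} |Y_t|` (valued in `ℝ≥0∞`). -/
def SInfty {Ω : Type*} [MeasurableSpace Ω] (P : Measure Ω) (a b : ℝ)
    (Y : ℝ × Ω → ℝ) : ℝ≥0∞ :=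
  essSup (fun ω => ⨆ t ∈ Set.Icc a b, (‖Y (t, ω)‖₊ : ℝ≥0∞)) P

private lemma meas_insert_time {Ω : Type*} (F : ℝ → MeasurableSpace Ω) (T : ℝ) :
    @Measurable Ω (ℝ × Ω) (F T) (predSigma F) (fun ω => (T, ω)) := by
  rw [measurable_iff_comap_le, predSigma, MeasurableSpace.comap_iSup]
  refine iSup_le fun X => ?_
  rw [MeasurableSpace.comap_comp]
  exact measurable_iff_comap_le.mp (X.2.2 T)

private lemma meas_gamma_slice {Ω α : Type*} {mα : MeasurableSpace α}
    (F : ℝ → MeasurableSpace Ω) (T : ℝ) {γ : (ℝ × Ω) × α → ℝ}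
    (hγ : Measurable[(predSigma F).prod mα] γ) :
    Measurable[(F T).prod mα] fun q : Ω × α => γ ((T, q.1), q.2) := by
  have h1 := meas_insert_time F T
  have h2 : @Measurable (Ω × α) ((ℝ × Ω) × α) ((F T).prod mα) ((predSigma F).prod mα)
      (fun q => ((T, q.1), q.2)) :=
    Measurable.prodMk (h1.comp measurable_fst) measurable_snd
  exact hγ.comp h2

private lemma meas_Yd_slice {Ω α : Type*} {mα : MeasurableSpace α}
    {F : ℝ → MeasurableSpace Ω} {X : (ℝ × Ω) × α → ℝ} (hX : ProgParamMeas F X)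
    {T q : ℝ} (h0 : 0 ≤ q) (hqT : q ≤ T) :
    Measurable[(F T).prod mα] fun p : Ω × α => X ((q, p.1), p.2) := by
  have h := hX T
  have h2 : @Measurable (Ω × α) (Set.Icc (0:ℝ) T × Ω × α) ((F T).prod mα)
      (MeasurableSpace.prod inferInstance (MeasurableSpace.prod (F T) mα))
      (fun p => (⟨q, ⟨h0, hqT⟩⟩, p)) := Measurable.prodMk measurable_const measurable_id
  exact h.comp h2

/-- truncation of a vector indexed by `Fin n` to its first `k` coordinates. -/
private def trvec {α : Type*} {n : ℕ} (k : Fin (n+1)) (f : Fin n → α) : Fin (k : ℕ) → α :=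
  fun i => f (Fin.castLE (Nat.lt_succ_iff.mp k.isLt) i)

private lemma measurable_trvec {α : Type*} [MeasurableSpace α] {n : ℕ} (k : Fin (n+1)) :
    Measurable fun f : Fin n → α => trvec k f :=
  measurable_pi_lambda _ fun i => measurable_pi_apply _

private lemma measurable_lastOr0_trvec {n : ℕ} (k : Fin (n+1)) :
    Measurable fun f : Fin n → ℝ => lastOr0 (trvec k f) := by
  rcases k with ⟨k, hk⟩
  cases k with
  | zero => exact measurable_const
  | succ m => exact measurable_pi_apply _

private def optval (T : ℝ) : Option ℚ → ℝ := fun j => j.elim T (fun r => (r : ℝ))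

set_option maxHeartbeats 1000000 in
private lemma key_transfer {Ω Λ' : Type*} {mΩ : MeasurableSpace Ω} {mΛ : MeasurableSpace Λ'}
    (P : Measure Ω) [IsProbabilityMeasure P]
    (F : ℝ → MeasurableSpace Ω) (hFle : ∀ t, F t ≤ mΩ) (T : ℝ)
    (lam : Measure Λ') [SigmaFinite lam]
    (ξ : Ω → Λ') (hξ : Measurable ξ)
    (g : Ω × Λ' → ℝ≥0∞) (hg : Measurable[(F T).prod mΛ] g) (hgtop : ∀ q, g q < ⊤)
    (hcond : ∀ A : Set Λ', MeasurableSet A →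
      (P[(fun ω => A.indicator (fun _ => (1:ℝ)) (ξ ω)) | F T]) =ᵐ[P]
        fun ω => ∫ p in A, (g (ω, p)).toReal ∂lam)
    (N : Set (Ω × Λ')) (hN : MeasurableSet[(F T).prod mΛ] N)
    (hsec : ∀ p, P {ω | (ω, p) ∈ N} = 0) :
    ∀ᵐ ω ∂P, (ω, ξ ω) ∉ N := by
  haveI hPfin : IsFiniteMeasure (P.trim (hFle T)) :=
    ⟨by rw [trim_measurableSet_eq (hFle T) MeasurableSet.univ]; exact measure_lt_top P _⟩
  set P' := P.trim (hFle T) with hP'def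
  -- sections of g are measurable
  have hgsec : ∀ ω, Measurable fun p => g (ω, p) := by
    intro ω
    exact hg.comp (@measurable_prodMk_left Ω Λ' (F T) mΛ ω)
  -- the lintegral kernel
  set I : Set Λ' → Ω → ℝ≥0∞ := fun A ω => ∫⁻ p in A, g (ω, p) ∂lam with hIdef
  have hIm : ∀ A : Set Λ', Measurable[F T] (I A) := by
    intro A
    exact @Measurable.lintegral_prod_right Ω Λ' (F T) mΛ (lam.restrict A) _ _ hg
  -- Bochner integral of toReal g equals toReal of I
  have hIto : ∀ (A : Set Λ') (ω : Ω),
      ∫ p in A, (g (ω, p)).toReal ∂lam = (I A ω).toReal := by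
    intro A ω
    rw [integral_toReal ((hgsec ω).aemeasurable.restrict)
      (Filter.Eventually.of_forall fun p => hgtop _)]
  -- I univ = 1 a.e.
  have hIuniv : ∀ᵐ ω ∂P, I Set.univ ω = 1 := by
    have hc := hcond Set.univ MeasurableSet.univ
    have hconst : (fun ω => Set.indicator Set.univ (fun _ => (1:ℝ)) (ξ ω)) =
        fun _ : Ω => (1:ℝ) := by ext ω; simp
    rw [hconst] at hc
    have h5 : (P[(fun _ : Ω => (1:ℝ))|F T]) =ᵐ[P] fun _ => (1:ℝ) :=
      by rw [condExp_const (μ := P) (hFle T) (1 : ℝ)]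
    filter_upwards [hc, h5] with ω h1 h2
    have : (I Set.univ ω).toReal = 1 := by
      rw [← hIto Set.univ ω, ← h1, h2]
    exact (ENNReal.toReal_eq_one_iff _).mp this
  have hIle : ∀ (A : Set Λ'), ∀ᵐ ω ∂P, I A ω ≤ 1 := by
    intro A
    filter_upwards [hIuniv] with ω h1
    calc I A ω ≤ I Set.univ ω :=
      lintegral_mono' (Measure.restrict_mono (Set.subset_univ A) le_rfl) le_rfl
    _ = 1 := h1
  -- the rectangle identity
  have hrect : ∀ S, MeasurableSet[F T] S → ∀ A : Set Λ', MeasurableSet A →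
      P (S ∩ ξ ⁻¹' A) = ∫⁻ ω in S, I A ω ∂P := by
    intro S hS A hA
    have hSm : MeasurableSet S := hFle T S hS
    have hind_eq : (fun ω => Set.indicator A (fun _ => (1:ℝ)) (ξ ω)) =
        (ξ ⁻¹' A).indicator (fun _ => (1:ℝ)) := by
      ext ω; by_cases h : ξ ω ∈ A <;> simp [h, Set.indicator]
    have hind : Integrable (fun ω => Set.indicator A (fun _ => (1:ℝ)) (ξ ω)) P := by
      rw [hind_eq]; exact (integrable_const (1:ℝ)).indicator (hξ hA)
    have h1 : ∫ ω in S, Set.indicator A (fun _ => (1:ℝ)) (ξ ω) ∂P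
        = (P (S ∩ ξ ⁻¹' A)).toReal := by
      simp only [hind_eq]
      rw [integral_indicator (hξ hA), Measure.restrict_restrict (hξ hA), integral_const]
      simp [Set.inter_comm, smul_eq_mul]
      rfl
    have h2 := setIntegral_condExp (hFle T) hind hS
    have h3 : ∫ ω in S, (P[(fun ω => Set.indicator A (fun _ => (1:ℝ)) (ξ ω))|F T]) ω ∂P
        = ∫ ω in S, (I A ω).toReal ∂P := by
      refine integral_congr_ae (Filter.EventuallyEq.restrict ?_)
      filter_upwards [hcond A hA] with ω h
      rw [h, hIto]
    have h4 : ∫ ω in S, (I A ω).toReal ∂P = (∫⁻ ω in S, I A ω ∂P).toReal := by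
      refine integral_toReal (((hIm A).mono (hFle T) le_rfl).aemeasurable.restrict) ?_
      exact ae_restrict_of_ae ((hIle A).mono fun ω h => h.trans_lt ENNReal.one_lt_top)
    have hfin2 : ∫⁻ ω in S, I A ω ∂P ≠ ⊤ := by
      have : ∫⁻ ω in S, I A ω ∂P ≤ ∫⁻ _ in S, 1 ∂P := by
        exact lintegral_mono_ae (ae_restrict_of_ae (hIle A))
      refine (this.trans_lt ?_).ne
      simpa using (measure_lt_top P S)
    have hchain : (P (S ∩ ξ ⁻¹' A)).toReal = (∫⁻ ω in S, I A ω ∂P).toReal := by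
      rw [← h1, ← h2, h3, h4]
    exact (ENNReal.toReal_eq_toReal_iff' (measure_ne_top P _) hfin2).mp hchain
  -- the two measures on (F T).prod mΛ
  set φ : Ω → Ω × Λ' := fun ω => (ω, ξ ω) with hφdef
  have hφ : @Measurable Ω (Ω × Λ') mΩ ((F T).prod mΛ) φ :=
    Measurable.prodMk (measurable_id'' (hFle T)) hξ
  set Qm : @Measure (Ω × Λ') ((F T).prod mΛ) := @Measure.map Ω (Ω × Λ') mΩ ((F T).prod mΛ) φ P
    with hQdef
  set ρ : @Measure (Ω × Λ') ((F T).prod mΛ) :=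
    @Measure.withDensity (Ω × Λ') ((F T).prod mΛ) (@Measure.prod Ω Λ' (F T) mΛ P' lam) g
    with hρdef
  haveI hQfin : IsFiniteMeasure Qm := by
    constructor
    rw [hQdef, Measure.map_apply hφ MeasurableSet.univ]
    simpa using measure_lt_top P _
  -- equality on rectangles
  have hrectQρ : ∀ S, MeasurableSet[F T] S → ∀ A : Set Λ', MeasurableSet A →
      Qm (S ×ˢ A) = ρ (S ×ˢ A) := by
    intro S hS A hA
    have hSA : MeasurableSet[(F T).prod mΛ] (S ×ˢ A) := @MeasurableSet.prod Ω Λ' (F T) mΛ _ _ hS hA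
    have hQ : Qm (S ×ˢ A) = P (S ∩ ξ ⁻¹' A) := by
      have hpre : φ ⁻¹' (S ×ˢ A) = S ∩ ξ ⁻¹' A := by ext ω; simp [hφdef]
      rw [hQdef, Measure.map_apply hφ hSA, hpre]
    have hρeq : ρ (S ×ˢ A) = ∫⁻ ω in S, I A ω ∂P' := by
      rw [hρdef, withDensity_apply g hSA]
      have h2 := @Measure.prod_restrict Ω Λ' (F T) mΛ P' lam _ _ S A
      have hae : AEMeasurable g (@Measure.prod Ω Λ' (F T) mΛ
          (@Measure.restrict Ω (F T) P' S) (lam.restrict A)) :=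
        hg.aemeasurable
      have h := @lintegral_prod Ω Λ' (F T) mΛ (@Measure.restrict Ω (F T) P' S)
        (lam.restrict A) _ g hae
      rw [h2] at h
      exact h
    have htrim : ∫⁻ ω in S, I A ω ∂P' = ∫⁻ ω in S, I A ω ∂P := by
      rw [← lintegral_indicator hS, ← @lintegral_indicator Ω mΩ P _ (hFle T S hS),
        hP'def, lintegral_trim (hFle T) ((hIm A).indicator hS)]
    rw [hQ, hρeq, htrim, hrect S hS A hA]
  have hgen : ((F T).prod mΛ) = MeasurableSpace.generateFrom
      (Set.image2 (· ×ˢ ·) { s : Set Ω | MeasurableSet[F T] s } { t : Set Λ' | MeasurableSet t }) :=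
    (@generateFrom_prod Ω Λ' (F T) mΛ).symm
  have hQρ : Qm = ρ := by
    refine ext_of_generate_finite _ hgen (@isPiSystem_prod Ω Λ' (F T) mΛ) ?_ ?_
    · rintro s ⟨S, hS, A, hA, rfl⟩
      exact hrectQρ S hS A hA
    · have h1 : Qm (Set.univ ×ˢ Set.univ) = ρ (Set.univ ×ˢ Set.univ) :=
        hrectQρ Set.univ MeasurableSet.univ Set.univ MeasurableSet.univ
      simpa using h1
  -- N is null for ρ
  haveI : SFinite P' := inferInstance
  have hnull : (@Measure.prod Ω Λ' (F T) mΛ P' lam) N = 0 := by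
    rw [@Measure.prod_apply_symm Ω Λ' (F T) mΛ P' lam _ _ N hN]
    have hz : ∀ p, P' ((fun ω => (ω, p)) ⁻¹' N) = 0 := by
      intro p
      have hm : MeasurableSet[F T] ((fun ω => (ω, p)) ⁻¹' N) :=
        (@measurable_prodMk_right Ω Λ' (F T) mΛ p) hN
      rw [hP'def, trim_measurableSet_eq (hFle T) hm]
      exact hsec p
    simp [hz]
  have hρN : ρ N = 0 := by
    have hac := @withDensity_absolutelyContinuous (Ω × Λ') ((F T).prod mΛ)
      (@Measure.prod Ω Λ' (F T) mΛ P' lam) g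
    rw [hρdef]
    exact hac hnull
  have hQN : P (φ ⁻¹' N) = 0 := by
    have : Qm N = 0 := by rw [hQρ]; exact hρN
    rwa [hQdef, Measure.map_apply hφ hN] at this
  rw [ae_iff]
  simp only [not_not]
  exact hQN

set_option maxHeartbeats 2000000 in
/-- **Uniform bound transfer** (Step 3 of the proof of Theorem 3.1): assume (HD). If each
càdlàg `𝒫ℳ(F, Δ_k, E^k)`-measurable process `Y^k` satisfies
`‖Y^k(θ_{(k)}, e_{(k)})‖_{S^∞[θ_k ∧ T, T]} ≤ M` for all `(θ, e) ∈ Δ_k × E^k`, then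
`P`-a.s. `|Y_t| ≤ (n+1) M` for all `t ∈ [0, T]`, where
`Y_t = Y^0_t 1_{t < τ_1} + ∑_{k=1}^n Y^k_t(τ_{(k)}, ζ_{(k)}) 1_{τ_k ≤ t < τ_{k+1}}`;
in particular `‖Y‖_{S^∞[0,T]} ≤ (n+1) M`. -/
theorem uniform_bound_transfer
    {Ω : Type*} [mΩ : MeasurableSpace Ω] (P : Measure Ω) [IsProbabilityMeasure P]
    {mdim : ℕ} {E : Set (Fin mdim → ℝ)} (hE : MeasurableSet E)
    (F : ℝ → MeasurableSpace Ω) (hFmono : Monotone F) (hFle : ∀ t, F t ≤ mΩ)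
    (n : ℕ) (hn : 1 ≤ n)
    (τ : ℕ → Ω → ℝ) (ζ : ℕ → Ω → ↥E)
    (hτm : ∀ k, Measurable (τ k)) (hτ0 : ∀ k ω, 0 ≤ τ k ω)
    (hτmono : ∀ k, 1 ≤ k → k < n → ∀ ω, τ k ω ≤ τ (k + 1) ω)
    (hζm : ∀ k, Measurable (ζ k))
    (γ : (ℝ × Ω) × ((Fin n → ℝ) × (Fin n → ↥E)) → ℝ)
    (hγ : DensityHypothesis P F τ ζ γ)
    (T : ℝ) (hT : 0 < T)
    (Yd : (k : ℕ) → (ℝ × Ω) × (Fin k → ℝ) × (Fin k → ↥E) → ℝ)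
    (hYdmeas : ∀ k, k ≤ n → ProgParamMeas F (Yd k))
    -- each `Y^k` is càdlàg in time
    (hYdrc : ∀ k, k ≤ n → ∀ (θ : Fin k → ℝ) (e : Fin k → ↥E) (ω : Ω) (t : ℝ),
      ContinuousWithinAt (fun u => Yd k ((u, ω), θ, e)) (Set.Ici t) t)
    (hYdll : ∀ k, k ≤ n → ∀ (θ : Fin k → ℝ) (e : Fin k → ↥E) (ω : Ω) (t : ℝ),
      ∃ l : ℝ, Filter.Tendsto (fun u => Yd k ((u, ω), θ, e))
        (nhdsWithin t (Set.Iio t)) (nhds l))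
    (M : ℝ) (hM0 : 0 ≤ M)
    (hM : ∀ k, k ≤ n → ∀ (θ : Fin k → ℝ) (e : Fin k → ↥E),
      (Monotone θ ∧ ∀ i, 0 ≤ θ i) →
      SInfty P (min (lastOr0 θ) T) T (fun p => Yd k (p, θ, e)) ≤ ENNReal.ofReal M)
    (Y : ℝ × Ω → ℝ)
    (hY : ∀ t ω, Y (t, ω) =
      (if t < τ 1 ω then
          Yd 0 ((t, ω), (fun i => τ ((i : ℕ) + 1) ω, fun i => ζ ((i : ℕ) + 1) ω))
        else 0) +
      (∑ k ∈ Finset.Ico 1 n,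
        if τ k ω ≤ t ∧ t < τ (k + 1) ω then
          Yd k ((t, ω), (fun i => τ ((i : ℕ) + 1) ω, fun i => ζ ((i : ℕ) + 1) ω))
        else 0) +
      (if τ n ω ≤ t then
          Yd n ((t, ω), (fun i => τ ((i : ℕ) + 1) ω, fun i => ζ ((i : ℕ) + 1) ω))
        else 0)) :
    (∀ᵐ ω ∂P, ∀ t ∈ Set.Icc (0 : ℝ) T, |Y (t, ω)| ≤ (n + 1) * M) ∧
    SInfty P 0 T Y ≤ ENNReal.ofReal ((n + 1) * M) := by
  classical
  -- σ-finiteness of the reference measures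
  have hemb : MeasurableEmbedding (Subtype.val : ↥E → (Fin mdim → ℝ)) :=
    MeasurableEmbedding.subtype_coe hE
  haveI hsfE : SigmaFinite (measE E) := by
    refine ⟨⟨⟨fun N => Subtype.val ⁻¹' (Metric.ball 0 N), fun _ => trivial, fun N => ?_, ?_⟩⟩⟩
    · rw [measE, hemb.comap_apply]
      exact (measure_mono (Set.image_preimage_subset _ _)).trans_lt measure_ball_lt_top
    · rw [← Set.preimage_iUnion, Metric.iUnion_ball_nat, Set.preimage_univ]
  haveI hsfLam : SigmaFinite (prodFinMeas E n) := by
    unfold prodFinMeas; infer_instance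
  -- monotonicity chain for the random times
  have hchain : ∀ ω, ∀ b a : ℕ, 1 ≤ a → a ≤ b → b ≤ n → τ a ω ≤ τ b ω := by
    intro ω b
    induction b with
    | zero => intro a ha hab _; omega
    | succ m ih =>
      intro a ha hab hbn
      rcases Nat.lt_or_ge a (m + 1) with h | h
      · have h1 : τ a ω ≤ τ m ω := ih a ha (by omega) (by omega)
        have h2 : τ m ω ≤ τ (m + 1) ω := hτmono m (by omega) (by omega) ω
        exact h1.trans h2
      · have ha' : a = m + 1 := by omega
        rw [ha']
  have hadm : ∀ ω, Monotone (fun i : Fin n => τ ((i : ℕ) + 1) ω) ∧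
      ∀ i : Fin n, (0 : ℝ) ≤ τ ((i : ℕ) + 1) ω := by
    intro ω
    refine ⟨fun i j hij => hchain ω ((j : ℕ) + 1) ((i : ℕ) + 1) (by omega)
      (Nat.succ_le_succ hij) j.isLt, fun i => hτ0 _ ω⟩
  -- measurability of the mark map
  have hξ : Measurable (fun ω => ((fun i : Fin n => τ ((i : ℕ) + 1) ω),
      (fun i : Fin n => ζ ((i : ℕ) + 1) ω))) :=
    (measurable_pi_lambda _ fun i => hτm _).prodMk (measurable_pi_lambda _ fun i => hζm _)
  -- the density viewed at time T
  have hg : Measurable[(F T).prod inferInstance]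
      (fun q : Ω × ((Fin n → ℝ) × (Fin n → ↥E)) => ENNReal.ofReal (γ ((T, q.1), q.2))) :=
    (meas_gamma_slice F T hγ.2.1).ennreal_ofReal
  have hgtop : ∀ q : Ω × ((Fin n → ℝ) × (Fin n → ↥E)),
      ENNReal.ofReal (γ ((T, q.1), q.2)) < ⊤ := fun q => ENNReal.ofReal_lt_top
  have hcond : ∀ A : Set ((Fin n → ℝ) × (Fin n → ↥E)), MeasurableSet A →
      (P[(fun ω => A.indicator (fun _ => (1 : ℝ))
          ((fun i : Fin n => τ ((i : ℕ) + 1) ω), (fun i : Fin n => ζ ((i : ℕ) + 1) ω))) | F T])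
        =ᵐ[P]
      fun ω => ∫ p in A, (ENNReal.ofReal (γ ((T, ω), p))).toReal ∂(prodFinMeas E n) := by
    intro A hA
    refine (hγ.2.2 T hT.le A hA).trans ?_
    refine Filter.Eventually.of_forall fun ω => ?_
    refine integral_congr_ae (Filter.Eventually.of_forall fun p => ?_)
    show γ ((T, ω), p) = (ENNReal.ofReal (γ ((T, ω), p))).toReal
    rw [ENNReal.toReal_ofReal (hγ.1 ((T, ω), p)).le]
  -- the bad set
  set N : Set (Ω × ((Fin n → ℝ) × (Fin n → ↥E))) :=
    ⋃ (k : Fin (n + 1)) (j : Option ℚ) (_ : optval T j ∈ Set.Icc (0 : ℝ) T),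
      {x : Ω × ((Fin n → ℝ) × (Fin n → ↥E)) |
        (Monotone x.2.1 ∧ ∀ i, 0 ≤ x.2.1 i) ∧
        min (lastOr0 (trvec k x.2.1)) T ≤ optval T j ∧
        M < |Yd (k : ℕ) ((optval T j, x.1), trvec k x.2.1, trvec k x.2.2)|} with hNdef
  -- measurability of N
  have hAdmSet : MeasurableSet {p : (Fin n → ℝ) × (Fin n → ↥E) | Monotone p.1 ∧ ∀ i, 0 ≤ p.1 i} := by
    rw [Set.setOf_and]
    refine MeasurableSet.inter ?_ ?_
    · have h1 : {p : (Fin n → ℝ) × (Fin n → ↥E) | Monotone p.1}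
          = ⋂ (i : Fin n) (j : Fin n) (_ : i ≤ j),
            {p : (Fin n → ℝ) × (Fin n → ↥E) | p.1 i ≤ p.1 j} := by
        ext p
        simp only [Set.mem_setOf_eq, Set.mem_iInter]
        exact ⟨fun h i j hij => h hij, fun h a b hab => h a b hab⟩
      rw [h1]
      exact MeasurableSet.iInter fun i => MeasurableSet.iInter fun j =>
        MeasurableSet.iInter fun _ => measurableSet_le
          (measurable_fst.eval) (measurable_fst.eval)
    · have h2 : {p : (Fin n → ℝ) × (Fin n → ↥E) | ∀ i, 0 ≤ p.1 i}
          = ⋂ (i : Fin n), {p : (Fin n → ℝ) × (Fin n → ↥E) | 0 ≤ p.1 i} := by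
        ext p; simp [Set.mem_iInter]
      rw [h2]
      exact MeasurableSet.iInter fun i => measurableSet_le measurable_const
        (measurable_fst.eval)
  have hsnd : @Measurable (Ω × ((Fin n → ℝ) × (Fin n → ↥E))) ((Fin n → ℝ) × (Fin n → ↥E))
      ((F T).prod inferInstance) inferInstance Prod.snd := measurable_snd
  have hYdm : ∀ (k : Fin (n + 1)) (c : ℝ), 0 ≤ c → c ≤ T →
      Measurable[(F T).prod inferInstance]
        (fun x : Ω × ((Fin n → ℝ) × (Fin n → ↥E)) =>
          Yd (k : ℕ) ((c, x.1), trvec k x.2.1, trvec k x.2.2)) := by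
    intro k c h0 hcT
    have h1 := meas_Yd_slice (hYdmeas (k : ℕ) (Nat.lt_succ_iff.mp k.isLt)) h0 hcT
    have h2 : @Measurable (Ω × ((Fin n → ℝ) × (Fin n → ↥E)))
        (Ω × ((Fin (k : ℕ) → ℝ) × (Fin (k : ℕ) → ↥E)))
        ((F T).prod inferInstance) ((F T).prod inferInstance)
        (fun x => (x.1, trvec k x.2.1, trvec k x.2.2)) := by
      refine Measurable.prodMk measurable_fst (Measurable.prodMk ?_ ?_)
      · exact ((measurable_trvec k).comp measurable_fst).comp hsnd
      · exact ((measurable_trvec k).comp measurable_snd).comp hsnd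
    exact h1.comp h2
  have hN : MeasurableSet[(F T).prod inferInstance] N := by
    rw [hNdef]
    refine MeasurableSet.iUnion fun k => MeasurableSet.iUnion fun j =>
      MeasurableSet.iUnion fun hj => ?_
    have heq : {x : Ω × ((Fin n → ℝ) × (Fin n → ↥E)) |
          (Monotone x.2.1 ∧ ∀ i, 0 ≤ x.2.1 i) ∧
          min (lastOr0 (trvec k x.2.1)) T ≤ optval T j ∧
          M < |Yd (k : ℕ) ((optval T j, x.1), trvec k x.2.1, trvec k x.2.2)|}
        = (Prod.snd ⁻¹' {p : (Fin n → ℝ) × (Fin n → ↥E) | Monotone p.1 ∧ ∀ i, 0 ≤ p.1 i}) ∩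
          ({x : Ω × ((Fin n → ℝ) × (Fin n → ↥E)) |
              min (lastOr0 (trvec k x.2.1)) T ≤ optval T j} ∩
            {x : Ω × ((Fin n → ℝ) × (Fin n → ↥E)) |
              M < |Yd (k : ℕ) ((optval T j, x.1), trvec k x.2.1, trvec k x.2.2)|}) := rfl
    rw [heq]
    refine MeasurableSet.inter (hsnd hAdmSet) (MeasurableSet.inter ?_ ?_)
    · have hminm : Measurable[(F T).prod inferInstance]
          (fun x : Ω × ((Fin n → ℝ) × (Fin n → ↥E)) => min (lastOr0 (trvec k x.2.1)) T) :=
        Measurable.min ((measurable_lastOr0_trvec k).comp (measurable_fst.comp hsnd))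
          measurable_const
      exact measurableSet_le hminm measurable_const
    · have habs : Measurable[(F T).prod inferInstance]
          (fun x : Ω × ((Fin n → ℝ) × (Fin n → ↥E)) =>
            |Yd (k : ℕ) ((optval T j, x.1), trvec k x.2.1, trvec k x.2.2)|) :=
        by
          have hh := hYdm k (optval T j) hj.1 hj.2
          have : (fun x : Ω × ((Fin n → ℝ) × (Fin n → ↥E)) =>
              |Yd (k : ℕ) ((optval T j, x.1), trvec k x.2.1, trvec k x.2.2)|)
              = (fun r : ℝ => |r|) ∘ (fun x : Ω × ((Fin n → ℝ) × (Fin n → ↥E)) =>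
                Yd (k : ℕ) ((optval T j, x.1), trvec k x.2.1, trvec k x.2.2)) := rfl
          rw [this]
          exact Measurable.comp (continuous_abs.measurable) hh
      exact measurableSet_lt measurable_const habs
  -- null sections
  have hsec : ∀ p : (Fin n → ℝ) × (Fin n → ↥E), P {ω | (ω, p) ∈ N} = 0 := by
    intro p
    by_cases hadmp : Monotone p.1 ∧ ∀ i, 0 ≤ p.1 i
    · have haeall : ∀ᵐ ω ∂P, ∀ k : Fin (n + 1),
          ∀ t ∈ Set.Icc (min (lastOr0 (trvec k p.1)) T) T,
            |Yd (k : ℕ) ((t, ω), trvec k p.1, trvec k p.2)| ≤ M := by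
        rw [ae_all_iff]
        intro k
        have hmono : Monotone (trvec k p.1) := by
          intro i j hij
          exact hadmp.1 (show Fin.castLE _ i ≤ Fin.castLE _ j from hij)
        have hM' := hM (k : ℕ) (Nat.lt_succ_iff.mp k.isLt) (trvec k p.1) (trvec k p.2)
          ⟨hmono, fun i => hadmp.2 _⟩
        simp only [SInfty] at hM'
        have hess := ENNReal.ae_le_essSup (μ := P)
          (f := fun ω => ⨆ t ∈ Set.Icc (min (lastOr0 (trvec k p.1)) T) T,
            (‖Yd (k : ℕ) ((t, ω), trvec k p.1, trvec k p.2)‖₊ : ℝ≥0∞))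
        filter_upwards [hess] with ω hω t ht
        have h3 : (‖Yd (k : ℕ) ((t, ω), trvec k p.1, trvec k p.2)‖₊ : ℝ≥0∞)
            ≤ ENNReal.ofReal M := by
          refine le_trans (le_trans ?_ hω) hM'
          exact le_iSup₂ (f := fun t (_ : t ∈ Set.Icc (min (lastOr0 (trvec k p.1)) T) T) =>
            (‖Yd (k : ℕ) ((t, ω), trvec k p.1, trvec k p.2)‖₊ : ℝ≥0∞)) t ht
        rw [← ENNReal.ofReal_coe_nnreal, coe_nnnorm, ENNReal.ofReal_le_ofReal_iff hM0] at h3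
        rwa [Real.norm_eq_abs] at h3
      rw [ae_iff] at haeall
      refine measure_mono_null ?_ haeall
      intro ω hω
      simp only [hNdef, Set.mem_iUnion, Set.mem_setOf_eq] at hω
      obtain ⟨k, j, hj, hx⟩ := hω
      simp only [Set.mem_setOf_eq]
      intro hall
      exact absurd (hall k (optval T j) ⟨hx.2.1, hj.2⟩) (not_le.mpr hx.2.2)
    · refine measure_mono_null ?_ (measure_empty (μ := P))
      intro ω hω
      simp only [hNdef, Set.mem_iUnion, Set.mem_setOf_eq] at hω
      obtain ⟨k, j, hj, hx⟩ := hω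
      exact absurd hx.1 hadmp
  -- the key measure-theoretic transfer
  have hkey := key_transfer P F hFle T (prodFinMeas E n)
    (fun ω => ((fun i : Fin n => τ ((i : ℕ) + 1) ω), (fun i : Fin n => ζ ((i : ℕ) + 1) ω)))
    hξ (fun q => ENNReal.ofReal (γ ((T, q.1), q.2))) hg hgtop hcond N hN hsec
  -- the pathwise bound for each component
  have hstep : ∀ᵐ ω ∂P, ∀ (k : Fin (n + 1)) (t : ℝ), 0 ≤ t → t ≤ T →
      min (lastOr0 (fun i : Fin (k : ℕ) => τ ((i : ℕ) + 1) ω)) T ≤ t →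
      |Yd (k : ℕ) ((t, ω), (fun i : Fin (k : ℕ) => τ ((i : ℕ) + 1) ω),
        (fun i : Fin (k : ℕ) => ζ ((i : ℕ) + 1) ω))| ≤ M := by
    filter_upwards [hkey] with ω hω
    intro k t ht0 htT hlb
    have hQb : ∀ j : Option ℚ, 0 ≤ optval T j → optval T j ≤ T →
        min (lastOr0 (fun i : Fin (k : ℕ) => τ ((i : ℕ) + 1) ω)) T ≤ optval T j →
        |Yd (k : ℕ) ((optval T j, ω), (fun i : Fin (k : ℕ) => τ ((i : ℕ) + 1) ω),
          (fun i : Fin (k : ℕ) => ζ ((i : ℕ) + 1) ω))| ≤ M := by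
      intro j hj0 hjT hjlb
      by_contra hgt
      apply hω
      rw [hNdef]
      refine Set.mem_iUnion.2 ⟨k, Set.mem_iUnion.2 ⟨j, Set.mem_iUnion.2 ⟨⟨hj0, hjT⟩, ?_⟩⟩⟩
      exact ⟨hadm ω, hjlb, lt_of_not_ge hgt⟩
    rcases eq_or_lt_of_le htT with heq | hlt
    · subst heq
      exact hQb none ht0 le_rfl hlb
    · have hex : ∀ m : ℕ, ∃ q : ℚ, t < (q : ℝ) ∧ (q : ℝ) < min (t + 1 / ((m : ℝ) + 1)) T := by
        intro m
        refine exists_rat_btwn (lt_min ?_ hlt)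
        have : (0 : ℝ) < 1 / ((m : ℝ) + 1) := by positivity
        linarith
      choose q hq1 hq2 using hex
      have hbound : ∀ m : ℕ,
          |Yd (k : ℕ) (((q m : ℝ), ω), (fun i : Fin (k : ℕ) => τ ((i : ℕ) + 1) ω),
            (fun i : Fin (k : ℕ) => ζ ((i : ℕ) + 1) ω))| ≤ M := by
        intro m
        exact hQb (some (q m)) (ht0.trans (hq1 m).le)
          ((hq2 m).trans_le (min_le_right _ _)).le (hlb.trans (hq1 m).le)
      have htend : Filter.Tendsto (fun m : ℕ => (q m : ℝ)) Filter.atTop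
          (nhdsWithin t (Set.Ici t)) := by
        rw [tendsto_nhdsWithin_iff]
        constructor
        · have hupper : Filter.Tendsto (fun m : ℕ => t + 1 / ((m : ℝ) + 1)) Filter.atTop
              (nhds t) := by
            have h : Filter.Tendsto (fun n : ℕ => 1 / ((n : ℝ) + 1)) Filter.atTop (nhds 0) :=
              tendsto_one_div_add_atTop_nhds_zero_nat
            simpa using Filter.Tendsto.const_add t h
          refine tendsto_of_tendsto_of_tendsto_of_le_of_le tendsto_const_nhds hupper
            (fun m => (hq1 m).le) (fun m => ((hq2 m).trans_le (min_le_left _ _)).le)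
        · exact Filter.Eventually.of_forall fun m => (hq1 m).le
      have hcont := hYdrc (k : ℕ) (Nat.lt_succ_iff.mp k.isLt)
        (fun i : Fin (k : ℕ) => τ ((i : ℕ) + 1) ω)
        (fun i : Fin (k : ℕ) => ζ ((i : ℕ) + 1) ω) ω t
      have hYtend := hcont.tendsto.comp htend
      exact le_of_tendsto hYtend.abs (Filter.Eventually.of_forall hbound)
  -- conclusion
  have main : ∀ᵐ ω ∂P, ∀ t ∈ Set.Icc (0 : ℝ) T, |Y (t, ω)| ≤ ((n : ℝ) + 1) * M := by
    filter_upwards [hstep] with ω hω t ht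
    rw [hY t ω]
    have h0 : |(if t < τ 1 ω then
        Yd 0 ((t, ω), (fun i : Fin 0 => τ ((i : ℕ) + 1) ω, fun i : Fin 0 => ζ ((i : ℕ) + 1) ω))
        else 0)| ≤ M := by
      split_ifs with h
      · have hlb : min (lastOr0 (fun i : Fin ((0 : Fin (n + 1)) : ℕ) => τ ((i : ℕ) + 1) ω)) T
            ≤ t := le_trans (min_le_left _ _) (le_of_eq rfl |>.trans ht.1)
        exact hω 0 t ht.1 ht.2 hlb
      · rw [abs_zero]; exact hM0
    have hmid : ∀ k ∈ Finset.Ico 1 n, |(if τ k ω ≤ t ∧ t < τ (k + 1) ω then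
        Yd k ((t, ω), (fun i : Fin k => τ ((i : ℕ) + 1) ω, fun i : Fin k => ζ ((i : ℕ) + 1) ω))
        else 0)| ≤ M := by
      intro k hk
      rw [Finset.mem_Ico] at hk
      split_ifs with h
      · obtain ⟨m, rfl⟩ : ∃ m, k = m + 1 := ⟨k - 1, by omega⟩
        have hlb : min (lastOr0 (fun i : Fin ((⟨m + 1, by omega⟩ : Fin (n + 1)) : ℕ) =>
            τ ((i : ℕ) + 1) ω)) T ≤ t := by
          refine le_trans (min_le_left _ _) ?_
          exact le_trans (le_of_eq rfl) h.1
        exact hω ⟨m + 1, by omega⟩ t ht.1 ht.2 hlb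
      · rw [abs_zero]; exact hM0
    have hlast : |(if τ n ω ≤ t then
        Yd n ((t, ω), (fun i : Fin n => τ ((i : ℕ) + 1) ω, fun i : Fin n => ζ ((i : ℕ) + 1) ω))
        else 0)| ≤ M := by
      split_ifs with h
      · obtain ⟨m, hm⟩ : ∃ m, n = m + 1 := ⟨n - 1, by omega⟩
        subst hm
        have hlb : min (lastOr0 (fun i : Fin ((⟨m + 1, by omega⟩ : Fin (m + 1 + 1)) : ℕ) =>
            τ ((i : ℕ) + 1) ω)) T ≤ t := by
          refine le_trans (min_le_left _ _) ?_
          exact le_trans (le_of_eq rfl) h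
        exact hω ⟨m + 1, by omega⟩ t ht.1 ht.2 hlb
      · rw [abs_zero]; exact hM0
    have hb : |∑ k ∈ Finset.Ico 1 n, (if τ k ω ≤ t ∧ t < τ (k + 1) ω then
        Yd k ((t, ω), (fun i : Fin k => τ ((i : ℕ) + 1) ω, fun i : Fin k => ζ ((i : ℕ) + 1) ω))
        else 0)| ≤ ((n : ℝ) - 1) * M := by
      refine le_trans (Finset.abs_sum_le_sum_abs _ _) ?_
      refine le_trans (Finset.sum_le_sum hmid) ?_
      rw [Finset.sum_const, Nat.card_Ico, nsmul_eq_mul, Nat.cast_sub hn, Nat.cast_one]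
    set a := (if t < τ 1 ω then
        Yd 0 ((t, ω), (fun i : Fin 0 => τ ((i : ℕ) + 1) ω, fun i : Fin 0 => ζ ((i : ℕ) + 1) ω))
        else 0) with hadef
    set b := ∑ k ∈ Finset.Ico 1 n, (if τ k ω ≤ t ∧ t < τ (k + 1) ω then
        Yd k ((t, ω), (fun i : Fin k => τ ((i : ℕ) + 1) ω, fun i : Fin k => ζ ((i : ℕ) + 1) ω))
        else 0) with hbdef
    set c := (if τ n ω ≤ t then
        Yd n ((t, ω), (fun i : Fin n => τ ((i : ℕ) + 1) ω, fun i : Fin n => ζ ((i : ℕ) + 1) ω))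
        else 0) with hcdef
    have habc : |a + b + c| ≤ |a| + |b| + |c| :=
      le_trans (abs_add_le _ _) (add_le_add_left (abs_add_le a b) _)
    have hfinal : |a| + |b| + |c| ≤ ((n : ℝ) + 1) * M := by
      have := add_le_add (add_le_add h0 hb) hlast
      calc |a| + |b| + |c| ≤ M + ((n : ℝ) - 1) * M + M := this
      _ = ((n : ℝ) + 1) * M := by ring
    exact le_trans habc hfinal
  refine ⟨main, ?_⟩
  refine essSup_le_of_ae_le _ ?_
  filter_upwards [main] with ω hω
  refine iSup₂_le fun t ht => ?_
  rw [← ENNReal.ofReal_coe_nnreal, coe_nnnorm]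
  refine ENNReal.ofReal_le_ofReal ?_
  rw [Real.norm_eq_abs]
  exact hω t ht

end PaperBSDEJumps
end
end

section
/- Properties of the exponential-utility generator (Step 2 of the proof of Theorem 5.1): Let α > 0, let C ⊂ ℝ be compact with 0 ∈ C, let σ, ϑ, β be uniformly bounded G-predictable coefficients with σ_t ≥ c_σ > 0 and β_t(e) > −1, and let λ be a nonnegative intensity with ∫_E λ_t(e) de uniformly bounded and λ_t = 0 for t > τ_n (hypothesis (HBI)). Define f̃(t,y,z,u) := inf_{π∈C} { (α²/2)|πσ_t|² y − απσ_t (z + ϑ_t y) + ∫_E [ e^{−απβ_t(e)} (u(e) + y) − y ] λ_t(e) de }. Then: (i) z ↦ f̃(t,y,z,u) is concave for all (t,y,u) (condition (HUQ1)); (ii) there exists a constant L such that |f̃(t, y, z, u(·)−y) − f̃(t, y', z, u(·)−y')| ≤ L|y−y'| for all t, z, u and y, y' ∈ ℝ (condition (HUQ2)); (iii) there exists a constant C' > 0 such that −C'(1 + |y| + |z| + ∫_E |u(e)| λ_t(e) de) ≤ f̃(t,y,z,u) ≤ C'(|y| + ∫_E |u(e)| λ_t(e) de) for all (t,y,z,u)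 (condition (HUQ3)); (iv) f̃(t,·,u) = f̃(t,·,0) for all u and all t ∈ (τ_n∧T, T] (condition (HUQ4)). -/
open MeasureTheory Set

noncomputable section

namespace PaperBSDEJumps

/-- The generator of the exponential-utility BSDE after the exponential change of variable:
`f̃(t, y, z, u) = inf_{π ∈ C} {(α²/2)|πσ_t|² y − απσ_t(z + ϑ_t y)
  + ∫_E [e^{−απβ_t(e)}(u(e) + y) − y] λ_t(e) de}`. -/
def tildeF {Ω : Type*} {mdim : ℕ} {E : Set (Fin mdim → ℝ)} (C : Set ℝ) (α : ℝ)
    (σ ϑ : ℝ × Ω → ℝ) (β lam : (ℝ × Ω) × ↥E → ℝ)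
    (t : ℝ) (ω : Ω) (y z : ℝ) (u : ↥E → ℝ) : ℝ :=
  ⨅ π : C, (α ^ 2 / 2 * ((π : ℝ) * σ (t, ω)) ^ 2 * y
    - α * (π : ℝ) * σ (t, ω) * (z + ϑ (t, ω) * y)
    + ∫ e, (Real.exp (-(α * (π : ℝ) * β ((t, ω), e))) * (u e + y) - y) * lam ((t, ω), e)
        ∂(measE E))

section Helpers

lemma concaveOn_ciInf_affine {ι : Type*} [Nonempty ι] (a b : ι → ℝ)
    (hbdd : ∀ z : ℝ, BddBelow (Set.range fun i => a i * z + b i)) :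
    ConcaveOn ℝ Set.univ fun z => ⨅ i, a i * z + b i := by
  refine ⟨convex_univ, fun x _ y _ p q hp hq hpq => ?_⟩
  simp only [smul_eq_mul]
  refine le_ciInf fun i => ?_
  have h1 : a i * (p * x + q * y) + b i = p * (a i * x + b i) + q * (a i * y + b i) := by
    linear_combination (-(b i)) * hpq
  rw [h1]
  have h2 := ciInf_le (hbdd x) i
  have h3 := ciInf_le (hbdd y) i
  have h4 := mul_le_mul_of_nonneg_left h2 hp
  have h5 := mul_le_mul_of_nonneg_left h3 hq
  linarith

lemma abs_ciInf_sub_ciInf_le {ι : Type*} [Nonempty ι] (f g : ι → ℝ)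
    (hf : BddBelow (Set.range f)) (hg : BddBelow (Set.range g)) {d : ℝ}
    (h : ∀ i, |f i - g i| ≤ d) : |(⨅ i, f i) - ⨅ i, g i| ≤ d := by
  rw [abs_sub_le_iff]
  constructor
  · have h1 : (⨅ i, f i) - d ≤ ⨅ i, g i := le_ciInf fun i => by
      have h2 := ciInf_le hf i
      have h3 := (abs_le.1 (h i)).2
      linarith
    linarith
  · have h1 : (⨅ i, g i) - d ≤ ⨅ i, f i := le_ciInf fun i => by
      have h2 := ciInf_le hg i
      have h3 := (abs_le.1 (h i)).1
      linarith
    linarith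

variable {X : Type*} [MeasurableSpace X] {μ : Measure X}

lemma generator_integral_bound {lam φ u : X → ℝ} (hlam0 : ∀ e, 0 ≤ lam e)
    (hlamint : Integrable lam μ) (hu : Measurable u)
    {cφ cΦ : ℝ} (hcφ : 0 < cφ) (hcΦ : 0 < cΦ)
    (hφlb : ∀ e, cφ ≤ φ e) (hφub : ∀ e, φ e ≤ cΦ) (y : ℝ) :
    |∫ e, (φ e * (u e + y) - y) * lam e ∂μ|
      ≤ cΦ * ((∫ e, |u e| * lam e ∂μ) + |y| * ∫ e, lam e ∂μ)
        + |y| * ∫ e, lam e ∂μ := by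
  have hΛ0 : 0 ≤ ∫ e, lam e ∂μ := integral_nonneg hlam0
  have hJ0 : 0 ≤ ∫ e, |u e| * lam e ∂μ :=
    integral_nonneg fun e => mul_nonneg (abs_nonneg _) (hlam0 e)
  have hlamae := hlamint.aestronglyMeasurable
  by_cases hInt : Integrable (fun e => (φ e * (u e + y) - y) * lam e) μ
  · have hφuy : Integrable (fun e => φ e * (u e + y) * lam e) μ := by
      have heq : (fun e => φ e * (u e + y) * lam e)
          = fun e => (φ e * (u e + y) - y) * lam e + y * lam e := funext fun e => by ring
      rw [heq]; exact hInt.add (hlamint.const_mul y)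
    have huy : Integrable (fun e => |u e + y| * lam e) μ := by
      refine Integrable.mono' (hφuy.abs.const_mul cφ⁻¹)
        (((hu.add_const y).abs.aestronglyMeasurable).mul hlamae) ?_
      filter_upwards with e
      rw [Real.norm_eq_abs, abs_of_nonneg (mul_nonneg (abs_nonneg _) (hlam0 e)),
        inv_mul_eq_div, le_div_iff₀ hcφ, abs_mul, abs_mul,
        abs_of_pos (lt_of_lt_of_le hcφ (hφlb e)), abs_of_nonneg (hlam0 e)]
      nlinarith [hφlb e, abs_nonneg (u e + y), hlam0 e,
        mul_nonneg (abs_nonneg (u e + y)) (hlam0 e)]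
    have hJint : Integrable (fun e => |u e| * lam e) μ := by
      refine Integrable.mono' (huy.add (hlamint.const_mul |y|))
        ((hu.abs.aestronglyMeasurable).mul hlamae) ?_
      filter_upwards with e
      rw [Real.norm_eq_abs, abs_of_nonneg (mul_nonneg (abs_nonneg _) (hlam0 e))]
      simp only [Pi.add_apply]
      have h5 : |u e| ≤ |u e + y| + |y| := by
        have := abs_add_le (u e + y) (-y); simpa using this
      nlinarith [hlam0 e]
    have heqdom : (fun e => (cΦ * (|u e| + |y|) + |y|) * lam e)
        = fun e => cΦ * (|u e| * lam e) + (cΦ * |y| + |y|) * lam e :=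
      funext fun e => by ring
    have hdom : Integrable (fun e => (cΦ * (|u e| + |y|) + |y|) * lam e) μ := by
      rw [heqdom]; exact (hJint.const_mul cΦ).add (hlamint.const_mul _)
    have hptw : ∀ e, |(φ e * (u e + y) - y) * lam e| ≤ (cΦ * (|u e| + |y|) + |y|) * lam e := by
      intro e
      rw [abs_mul, abs_of_nonneg (hlam0 e)]
      refine mul_le_mul_of_nonneg_right ?_ (hlam0 e)
      have h1 : |φ e * (u e + y) - y| ≤ |φ e * (u e + y)| + |y| := by
        have := abs_add_le (φ e * (u e + y)) (-y); simpa [sub_eq_add_neg] using this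
      have h2 : |φ e * (u e + y)| = φ e * |u e + y| := by
        rw [abs_mul, abs_of_pos (lt_of_lt_of_le hcφ (hφlb e))]
      have h3 : |u e + y| ≤ |u e| + |y| := abs_add_le _ _
      have h4 : φ e * |u e + y| ≤ cΦ * (|u e| + |y|) :=
        mul_le_mul (hφub e) h3 (abs_nonneg _) hcΦ.le
      linarith
    calc |∫ e, (φ e * (u e + y) - y) * lam e ∂μ|
        ≤ ∫ e, ‖(φ e * (u e + y) - y) * lam e‖ ∂μ := by
          rw [← Real.norm_eq_abs]
          exact norm_integral_le_integral_norm _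
      _ ≤ ∫ e, (cΦ * (|u e| + |y|) + |y|) * lam e ∂μ :=
          integral_mono hInt.norm hdom fun e => by
            rw [Real.norm_eq_abs]; exact hptw e
      _ = cΦ * ((∫ e, |u e| * lam e ∂μ) + |y| * ∫ e, lam e ∂μ) + |y| * ∫ e, lam e ∂μ := by
          rw [heqdom, integral_add (hJint.const_mul cΦ) (hlamint.const_mul _),
            integral_const_mul, integral_const_mul]
          ring
  · rw [integral_undef hInt, abs_zero]
    have := mul_nonneg hcΦ.le (add_nonneg hJ0 (mul_nonneg (abs_nonneg y) hΛ0))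
    have := mul_nonneg (abs_nonneg y) hΛ0
    linarith

lemma generator_integral_shift {lam φ u : X → ℝ} (hlam0 : ∀ e, 0 ≤ lam e)
    (hlamint : Integrable lam μ) (hu : Measurable u)
    {cφ cΦ : ℝ} (hcφ : 0 < cφ) (hcΦ : 0 < cΦ)
    (hφlb : ∀ e, cφ ≤ φ e) (hφub : ∀ e, φ e ≤ cΦ) (y y' : ℝ) :
    |∫ e, (φ e * u e - y) * lam e ∂μ|
        ≤ cΦ * (∫ e, |u e| * lam e ∂μ) + |y| * ∫ e, lam e ∂μ ∧
      |(∫ e, (φ e * u e - y) * lam e ∂μ) - ∫ e, (φ e * u e - y') * lam e ∂μ|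
        ≤ |y - y'| * ∫ e, lam e ∂μ := by
  have hΛ0 : 0 ≤ ∫ e, lam e ∂μ := integral_nonneg hlam0
  have hJ0 : 0 ≤ ∫ e, |u e| * lam e ∂μ :=
    integral_nonneg fun e => mul_nonneg (abs_nonneg _) (hlam0 e)
  have hlamae := hlamint.aestronglyMeasurable
  have key : ∀ c : ℝ, (fun e => (φ e * u e - c) * lam e)
      = fun e => φ e * u e * lam e - c * lam e := fun c => funext fun e => by ring
  by_cases hφu : Integrable (fun e => φ e * u e * lam e) μ
  · have hJint : Integrable (fun e => |u e| * lam e) μ := by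
      refine Integrable.mono' (hφu.abs.const_mul cφ⁻¹)
        ((hu.abs.aestronglyMeasurable).mul hlamae) ?_
      filter_upwards with e
      rw [Real.norm_eq_abs, abs_of_nonneg (mul_nonneg (abs_nonneg _) (hlam0 e)),
        inv_mul_eq_div, le_div_iff₀ hcφ, abs_mul, abs_mul,
        abs_of_pos (lt_of_lt_of_le hcφ (hφlb e)), abs_of_nonneg (hlam0 e)]
      nlinarith [hφlb e, abs_nonneg (u e), hlam0 e,
        mul_nonneg (abs_nonneg (u e)) (hlam0 e)]
    have hval : ∀ c : ℝ, (∫ e, (φ e * u e - c) * lam e ∂μ)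
        = (∫ e, φ e * u e * lam e ∂μ) - c * ∫ e, lam e ∂μ := fun c => by
      rw [key c, integral_sub hφu (hlamint.const_mul c), integral_const_mul]
    have h1 : |∫ e, φ e * u e * lam e ∂μ| ≤ cΦ * ∫ e, |u e| * lam e ∂μ := by
      calc |∫ e, φ e * u e * lam e ∂μ| ≤ ∫ e, ‖φ e * u e * lam e‖ ∂μ := by
            rw [← Real.norm_eq_abs]; exact norm_integral_le_integral_norm _
        _ ≤ ∫ e, cΦ * (|u e| * lam e) ∂μ := by
            refine integral_mono hφu.norm (hJint.const_mul cΦ) fun e => ?_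
            rw [Real.norm_eq_abs, abs_mul, abs_mul,
              abs_of_pos (lt_of_lt_of_le hcφ (hφlb e)), abs_of_nonneg (hlam0 e)]
            nlinarith [hφub e, abs_nonneg (u e), hlam0 e,
              mul_nonneg (abs_nonneg (u e)) (hlam0 e)]
        _ = cΦ * ∫ e, |u e| * lam e ∂μ := integral_const_mul _ _
    constructor
    · rw [hval y]
      have h2 : |(∫ e, φ e * u e * lam e ∂μ) - y * ∫ e, lam e ∂μ|
          ≤ |∫ e, φ e * u e * lam e ∂μ| + |y * ∫ e, lam e ∂μ| := by
        have := abs_add_le (∫ e, φ e * u e * lam e ∂μ) (-(y * ∫ e, lam e ∂μ))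
        simpa [sub_eq_add_neg] using this
      rw [abs_mul, abs_of_nonneg hΛ0] at h2
      linarith
    · rw [hval y, hval y']
      have h3 : (∫ e, φ e * u e * lam e ∂μ) - y * ∫ e, lam e ∂μ
          - ((∫ e, φ e * u e * lam e ∂μ) - y' * ∫ e, lam e ∂μ)
          = (y' - y) * ∫ e, lam e ∂μ := by ring
      rw [h3, abs_mul, abs_of_nonneg hΛ0, abs_sub_comm]
  · have hnint : ∀ c : ℝ, ¬ Integrable (fun e => (φ e * u e - c) * lam e) μ := by
      intro c hc
      apply hφu
      have heq : (fun e => φ e * u e * lam e)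
          = fun e => (φ e * u e - c) * lam e + c * lam e := funext fun e => by ring
      rw [heq]; exact hc.add (hlamint.const_mul c)
    rw [integral_undef (hnint y), integral_undef (hnint y')]
    have h4 := mul_nonneg hcΦ.le hJ0
    have h5 := mul_nonneg (abs_nonneg y) hΛ0
    have h6 := mul_nonneg (abs_nonneg (y - y')) hΛ0
    constructor
    · rw [abs_zero]; linarith
    · rw [sub_zero, abs_zero]; linarith

end Helpers

set_option maxHeartbeats 1000000 in
/-- **Properties of the exponential-utility generator** (Step 2 of the proof of Theorem 5.1):
the generator `f̃` satisfies (HUQ1) (concavity in `z`), (HUQ2) (uniform Lipschitz estimate in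
`y` along `u(·) − y`), (HUQ3) (linear-quadratic growth bounds), and (HUQ4)
(`f̃(t, ·, u) = f̃(t, ·, 0)` for `t ∈ (τ_n ∧ T, T]`). -/
theorem exponential_generator_properties
    {Ω : Type*} [mΩ : MeasurableSpace Ω] (P : Measure Ω) [IsProbabilityMeasure P]
    {mdim : ℕ} {E : Set (Fin mdim → ℝ)} (hE : MeasurableSet E)
    (T : ℝ) (hT : 0 < T)
    (n : ℕ) (hn : 1 ≤ n) (τ : ℕ → Ω → ℝ) (hτ0 : ∀ k ω, 0 ≤ τ k ω)
    (α : ℝ) (hα : 0 < α)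
    (C : Set ℝ) (hC : IsCompact C) (h0C : (0 : ℝ) ∈ C)
    (σ ϑ : ℝ × Ω → ℝ) (β lam : (ℝ × Ω) × ↥E → ℝ)
    -- uniform boundedness of the coefficients
    (hbd : ∃ K : ℝ, ∀ (t : ℝ) (ω : Ω), |σ (t, ω)| ≤ K ∧ |ϑ (t, ω)| ≤ K ∧
      ∀ e : ↥E, |β ((t, ω), e)| ≤ K)
    (hσpos : ∃ cσ : ℝ, 0 < cσ ∧ ∀ (t : ℝ) (ω : Ω), cσ ≤ σ (t, ω))
    (hβ : ∀ p, -1 < β p)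
    -- the intensity: nonnegative, integrable, with uniformly bounded total mass (HBI),
    -- vanishing after `τ_n`
    (hlam0 : ∀ p, 0 ≤ lam p)
    (hlamint : ∀ (t : ℝ) (ω : Ω), Integrable (fun e => lam ((t, ω), e)) (measE E))
    (hlambd : ∃ K : ℝ, ∀ (t : ℝ) (ω : Ω), ∫ e, lam ((t, ω), e) ∂(measE E) ≤ K)
    (hlamτ : ∀ (t : ℝ) (ω : Ω) (e : ↥E), τ n ω < t → lam ((t, ω), e) = 0) :
    -- (HUQ1): concavity in `z`
    (∀ (t : ℝ) (ω : Ω) (y : ℝ) (u : ↥E → ℝ), Measurable u →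
      ConcaveOn ℝ Set.univ (fun z => tildeF C α σ ϑ β lam t ω y z u)) ∧
    -- (HUQ2): uniform Lipschitz continuity in `y`
    (∃ L : ℝ, ∀ (t : ℝ) (ω : Ω) (z : ℝ) (u : ↥E → ℝ), Measurable u → ∀ y y' : ℝ,
      |tildeF C α σ ϑ β lam t ω y z (fun e => u e - y)
        - tildeF C α σ ϑ β lam t ω y' z (fun e => u e - y')| ≤ L * |y - y'|) ∧
    -- (HUQ3): growth bounds
    (∃ C' : ℝ, 0 < C' ∧ ∀ (t : ℝ) (ω : Ω) (y z : ℝ) (u : ↥E → ℝ), Measurable u →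
      -C' * (1 + |y| + |z| + ∫ e, |u e| * lam ((t, ω), e) ∂(measE E))
          ≤ tildeF C α σ ϑ β lam t ω y z u ∧
        tildeF C α σ ϑ β lam t ω y z u
          ≤ C' * (|y| + ∫ e, |u e| * lam ((t, ω), e) ∂(measE E))) ∧
    -- (HUQ4): after `τ_n ∧ T` the generator does not depend on `u`
    (∀ (t : ℝ) (ω : Ω), min (τ n ω) T < t → t ≤ T →
      ∀ (y z : ℝ) (u : ↥E → ℝ), Measurable u →
        tildeF C α σ ϑ β lam t ω y z u = tildeF C α σ ϑ β lam t ω y z fun _ => 0) := by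
  obtain ⟨K0, hK0⟩ := hbd
  obtain ⟨Klam0, hKlam0⟩ := hlambd
  obtain ⟨M0, hM0⟩ := isBounded_iff_forall_norm_le.1 hC.isBounded
  haveI : Nonempty C := ⟨⟨0, h0C⟩⟩
  obtain ⟨K, hKdef⟩ : ∃ x : ℝ, x = max K0 1 := ⟨_, rfl⟩
  obtain ⟨M, hMdef⟩ : ∃ x : ℝ, x = max M0 1 := ⟨_, rfl⟩
  obtain ⟨Klam, hKlamdef⟩ : ∃ x : ℝ, x = max Klam0 0 := ⟨_, rfl⟩
  have hK1 : (1:ℝ) ≤ K := by rw [hKdef]; exact le_max_right _ _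
  have hK0n : (0:ℝ) ≤ K := zero_le_one.trans hK1
  have hM1 : (1:ℝ) ≤ M := by rw [hMdef]; exact le_max_right _ _
  have hM0n : (0:ℝ) ≤ M := zero_le_one.trans hM1
  have hKlamn : (0:ℝ) ≤ Klam := by rw [hKlamdef]; exact le_max_right _ _
  have hK0K : K0 ≤ K := by rw [hKdef]; exact le_max_left _ _
  have hσK : ∀ (t : ℝ) (ω : Ω), |σ (t, ω)| ≤ K := fun t ω => ((hK0 t ω).1).trans hK0K
  have hϑK : ∀ (t : ℝ) (ω : Ω), |ϑ (t, ω)| ≤ K :=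
    fun t ω => ((hK0 t ω).2.1).trans hK0K
  have hβK : ∀ (t : ℝ) (ω : Ω) (e : ↥E), |β ((t, ω), e)| ≤ K :=
    fun t ω e => ((hK0 t ω).2.2 e).trans hK0K
  have hπM : ∀ π ∈ C, |π| ≤ M := fun π hπ => by
    have h := hM0 π hπ
    rw [Real.norm_eq_abs] at h
    rw [hMdef]
    exact h.trans (le_max_left _ _)
  have hΛ0 : ∀ (t : ℝ) (ω : Ω), 0 ≤ ∫ e, lam ((t, ω), e) ∂(measE E) :=
    fun t ω => integral_nonneg fun e => hlam0 _
  have hΛK : ∀ (t : ℝ) (ω : Ω), (∫ e, lam ((t, ω), e) ∂(measE E)) ≤ Klam :=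
    fun t ω => (hKlam0 t ω).trans (by rw [hKlamdef]; exact le_max_left _ _)
  obtain ⟨cφ, hcφdef⟩ : ∃ x : ℝ, x = Real.exp (-(α * M * K)) := ⟨_, rfl⟩
  obtain ⟨cΦ, hcΦdef⟩ : ∃ x : ℝ, x = Real.exp (α * M * K) := ⟨_, rfl⟩
  have hcφ : 0 < cφ := hcφdef ▸ Real.exp_pos _
  have hcΦ : 0 < cΦ := hcΦdef ▸ Real.exp_pos _
  have hφb : ∀ (t : ℝ) (ω : Ω) (π : ℝ), |π| ≤ M →
      (∀ e, cφ ≤ Real.exp (-(α * π * β ((t, ω), e)))) ∧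
      (∀ e, Real.exp (-(α * π * β ((t, ω), e))) ≤ cΦ) := by
    intro t ω π hπ
    have habs : ∀ e : ↥E, |α * π * β ((t, ω), e)| ≤ α * M * K := by
      intro e
      rw [abs_mul, abs_mul, abs_of_pos hα, mul_assoc, mul_assoc]
      exact mul_le_mul_of_nonneg_left
        (mul_le_mul hπ (hβK t ω e) (abs_nonneg _) hM0n) hα.le
    constructor
    · intro e
      rw [hcφdef]
      refine Real.exp_le_exp.2 ?_
      have := (abs_le.1 (habs e)).2; linarith
    · intro e
      rw [hcΦdef]
      refine Real.exp_le_exp.2 ?_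
      have := (abs_le.1 (habs e)).1; linarith
  have hQ1 : ∀ (t : ℝ) (ω : Ω) (π : ℝ), |π| ≤ M → ∀ y z : ℝ,
      |α ^ 2 / 2 * (π * σ (t, ω)) ^ 2 * y - α * π * σ (t, ω) * (z + ϑ (t, ω) * y)|
        ≤ α ^ 2 / 2 * (M * K) ^ 2 * |y| + α * M * K * (|z| + K * |y|) := by
    intro t ω π hπ y z
    have hπσ : |π * σ (t, ω)| ≤ M * K := by
      rw [abs_mul]; exact mul_le_mul hπ (hσK t ω) (abs_nonneg _) hM0n
    have hsq : (π * σ (t, ω)) ^ 2 ≤ (M * K) ^ 2 := by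
      rw [← sq_abs (π * σ (t, ω))]; exact pow_le_pow_left₀ (abs_nonneg _) hπσ 2
    have hA : |α ^ 2 / 2 * (π * σ (t, ω)) ^ 2 * y| ≤ α ^ 2 / 2 * (M * K) ^ 2 * |y| := by
      rw [abs_mul, abs_mul, abs_of_nonneg (by positivity : (0:ℝ) ≤ α ^ 2 / 2),
        abs_of_nonneg (sq_nonneg (π * σ (t, ω)))]
      have h1 : α ^ 2 / 2 * (π * σ (t, ω)) ^ 2 ≤ α ^ 2 / 2 * (M * K) ^ 2 :=
        mul_le_mul_of_nonneg_left hsq (by positivity)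
      exact mul_le_mul_of_nonneg_right h1 (abs_nonneg y)
    have h3 : |α * π * σ (t, ω)| ≤ α * M * K := by
      rw [abs_mul, abs_mul, abs_of_pos hα, mul_assoc, mul_assoc]
      exact mul_le_mul_of_nonneg_left
        (mul_le_mul hπ (hσK t ω) (abs_nonneg _) hM0n) hα.le
    have h4 : |z + ϑ (t, ω) * y| ≤ |z| + K * |y| := by
      refine (abs_add_le _ _).trans ?_
      rw [abs_mul]
      have := mul_le_mul_of_nonneg_right (hϑK t ω) (abs_nonneg y)
      linarith
    have hB : |α * π * σ (t, ω) * (z + ϑ (t, ω) * y)| ≤ α * M * K * (|z| + K * |y|) := by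
      rw [abs_mul]
      exact mul_le_mul h3 h4 (abs_nonneg _) (mul_nonneg (mul_nonneg hα.le hM0n) hK0n)
    have htri : |α ^ 2 / 2 * (π * σ (t, ω)) ^ 2 * y - α * π * σ (t, ω) * (z + ϑ (t, ω) * y)|
        ≤ |α ^ 2 / 2 * (π * σ (t, ω)) ^ 2 * y| + |α * π * σ (t, ω) * (z + ϑ (t, ω) * y)| := by
      have := abs_add_le (α ^ 2 / 2 * (π * σ (t, ω)) ^ 2 * y)
        (-(α * π * σ (t, ω) * (z + ϑ (t, ω) * y)))
      simpa [sub_eq_add_neg] using this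
    linarith
  have hQ2 : ∀ (t : ℝ) (ω : Ω) (π : ℝ), |π| ≤ M →
      |α ^ 2 / 2 * (π * σ (t, ω)) ^ 2 - α * π * σ (t, ω) * ϑ (t, ω)|
        ≤ α ^ 2 / 2 * (M * K) ^ 2 + α * M * K * K := by
    intro t ω π hπ
    have hπσ : |π * σ (t, ω)| ≤ M * K := by
      rw [abs_mul]; exact mul_le_mul hπ (hσK t ω) (abs_nonneg _) hM0n
    have hsq : (π * σ (t, ω)) ^ 2 ≤ (M * K) ^ 2 := by
      rw [← sq_abs (π * σ (t, ω))]; exact pow_le_pow_left₀ (abs_nonneg _) hπσ 2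
    have hA : |α ^ 2 / 2 * (π * σ (t, ω)) ^ 2| ≤ α ^ 2 / 2 * (M * K) ^ 2 := by
      rw [abs_mul, abs_of_nonneg (by positivity : (0:ℝ) ≤ α ^ 2 / 2),
        abs_of_nonneg (sq_nonneg (π * σ (t, ω)))]
      exact mul_le_mul_of_nonneg_left hsq (by positivity)
    have h3 : |α * π * σ (t, ω)| ≤ α * M * K := by
      rw [abs_mul, abs_mul, abs_of_pos hα, mul_assoc, mul_assoc]
      exact mul_le_mul_of_nonneg_left
        (mul_le_mul hπ (hσK t ω) (abs_nonneg _) hM0n) hα.le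
    have hB : |α * π * σ (t, ω) * ϑ (t, ω)| ≤ α * M * K * K := by
      rw [abs_mul]
      exact mul_le_mul h3 (hϑK t ω) (abs_nonneg _) (mul_nonneg (mul_nonneg hα.le hM0n) hK0n)
    have htri : |α ^ 2 / 2 * (π * σ (t, ω)) ^ 2 - α * π * σ (t, ω) * ϑ (t, ω)|
        ≤ |α ^ 2 / 2 * (π * σ (t, ω)) ^ 2| + |α * π * σ (t, ω) * ϑ (t, ω)| := by
      have := abs_add_le (α ^ 2 / 2 * (π * σ (t, ω)) ^ 2) (-(α * π * σ (t, ω) * ϑ (t, ω)))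
      simpa [sub_eq_add_neg] using this
    linarith
  -- lower bounds on the infimand
  have hGlb : ∀ (t : ℝ) (ω : Ω) (y z : ℝ) (u : ↥E → ℝ), Measurable u → ∀ π : C,
      -(α ^ 2 / 2 * (M * K) ^ 2 * |y| + α * M * K * (|z| + K * |y|)
          + (cΦ * ((∫ e, |u e| * lam ((t, ω), e) ∂(measE E)) + |y| * Klam) + |y| * Klam))
        ≤ α ^ 2 / 2 * ((π : ℝ) * σ (t, ω)) ^ 2 * y
            - α * (π : ℝ) * σ (t, ω) * (z + ϑ (t, ω) * y)
            + ∫ e, (Real.exp (-(α * (π : ℝ) * β ((t, ω), e))) * (u e + y) - y)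
                * lam ((t, ω), e) ∂(measE E) := by
    intro t ω y z u hu π
    have hπ := hπM (π : ℝ) π.2
    have hq := (abs_le.1 (hQ1 t ω (π : ℝ) hπ y z)).1
    have hib := (abs_le.1 (generator_integral_bound (fun e => hlam0 _) (hlamint t ω) hu
      hcφ hcΦ ((hφb t ω (π : ℝ) hπ).1) ((hφb t ω (π : ℝ) hπ).2) y)).1
    have h3 : cΦ * ((∫ e, |u e| * lam ((t, ω), e) ∂(measE E))
          + |y| * ∫ e, lam ((t, ω), e) ∂(measE E))
        ≤ cΦ * ((∫ e, |u e| * lam ((t, ω), e) ∂(measE E)) + |y| * Klam) :=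
      mul_le_mul_of_nonneg_left
        (add_le_add_right (mul_le_mul_of_nonneg_left (hΛK t ω) (abs_nonneg y)) _) hcΦ.le
    have h4 : |y| * (∫ e, lam ((t, ω), e) ∂(measE E)) ≤ |y| * Klam :=
      mul_le_mul_of_nonneg_left (hΛK t ω) (abs_nonneg y)
    linarith
  have hBdd : ∀ (t : ℝ) (ω : Ω) (y z : ℝ) (u : ↥E → ℝ), Measurable u →
      BddBelow (Set.range fun π : C =>
        α ^ 2 / 2 * ((π : ℝ) * σ (t, ω)) ^ 2 * y
          - α * (π : ℝ) * σ (t, ω) * (z + ϑ (t, ω) * y)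
          + ∫ e, (Real.exp (-(α * (π : ℝ) * β ((t, ω), e))) * (u e + y) - y)
              * lam ((t, ω), e) ∂(measE E)) := by
    intro t ω y z u hu
    refine ⟨-(α ^ 2 / 2 * (M * K) ^ 2 * |y| + α * M * K * (|z| + K * |y|)
      + (cΦ * ((∫ e, |u e| * lam ((t, ω), e) ∂(measE E)) + |y| * Klam) + |y| * Klam)), ?_⟩
    rintro x ⟨π, rfl⟩
    exact hGlb t ω y z u hu π
  have hGlb' : ∀ (t : ℝ) (ω : Ω) (y z : ℝ) (u : ↥E → ℝ), Measurable u → ∀ π : C,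
      -(α ^ 2 / 2 * (M * K) ^ 2 * |y| + α * M * K * (|z| + K * |y|)
          + (cΦ * (∫ e, |u e| * lam ((t, ω), e) ∂(measE E)) + |y| * Klam))
        ≤ α ^ 2 / 2 * ((π : ℝ) * σ (t, ω)) ^ 2 * y
            - α * (π : ℝ) * σ (t, ω) * (z + ϑ (t, ω) * y)
            + ∫ e, (Real.exp (-(α * (π : ℝ) * β ((t, ω), e))) * u e - y)
                * lam ((t, ω), e) ∂(measE E) := by
    intro t ω y z u hu π
    have hπ := hπM (π : ℝ) π.2
    have hq := (abs_le.1 (hQ1 t ω (π : ℝ) hπ y z)).1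
    have hib := (abs_le.1 ((generator_integral_shift (fun e => hlam0 _) (hlamint t ω) hu
      hcφ hcΦ ((hφb t ω (π : ℝ) hπ).1) ((hφb t ω (π : ℝ) hπ).2) y y).1)).1
    have h4 : |y| * (∫ e, lam ((t, ω), e) ∂(measE E)) ≤ |y| * Klam :=
      mul_le_mul_of_nonneg_left (hΛK t ω) (abs_nonneg y)
    linarith
  have hBdd' : ∀ (t : ℝ) (ω : Ω) (y z : ℝ) (u : ↥E → ℝ), Measurable u →
      BddBelow (Set.range fun π : C =>
        α ^ 2 / 2 * ((π : ℝ) * σ (t, ω)) ^ 2 * y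
          - α * (π : ℝ) * σ (t, ω) * (z + ϑ (t, ω) * y)
          + ∫ e, (Real.exp (-(α * (π : ℝ) * β ((t, ω), e))) * u e - y)
              * lam ((t, ω), e) ∂(measE E)) := by
    intro t ω y z u hu
    refine ⟨-(α ^ 2 / 2 * (M * K) ^ 2 * |y| + α * M * K * (|z| + K * |y|)
      + (cΦ * (∫ e, |u e| * lam ((t, ω), e) ∂(measE E)) + |y| * Klam)), ?_⟩
    rintro x ⟨π, rfl⟩
    exact hGlb' t ω y z u hu π
  have htF : ∀ (t : ℝ) (ω : Ω) (y z : ℝ) (u : ↥E → ℝ),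
      tildeF C α σ ϑ β lam t ω y z u = ⨅ π : C,
        (α ^ 2 / 2 * ((π : ℝ) * σ (t, ω)) ^ 2 * y
          - α * (π : ℝ) * σ (t, ω) * (z + ϑ (t, ω) * y)
          + ∫ e, (Real.exp (-(α * (π : ℝ) * β ((t, ω), e))) * (u e + y) - y)
              * lam ((t, ω), e) ∂(measE E)) := fun t ω y z u => rfl
  have htFs : ∀ (t : ℝ) (ω : Ω) (y z : ℝ) (u : ↥E → ℝ),
      tildeF C α σ ϑ β lam t ω y z (fun e => u e - y) = ⨅ π : C,
        (α ^ 2 / 2 * ((π : ℝ) * σ (t, ω)) ^ 2 * y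
          - α * (π : ℝ) * σ (t, ω) * (z + ϑ (t, ω) * y)
          + ∫ e, (Real.exp (-(α * (π : ℝ) * β ((t, ω), e))) * u e - y)
              * lam ((t, ω), e) ∂(measE E)) := by
    intro t ω y z u
    rw [htF]
    refine iInf_congr fun π => ?_
    congr 1
    refine integral_congr_ae (Filter.Eventually.of_forall fun e => ?_)
    show (Real.exp (-(α * (π : ℝ) * β ((t, ω), e))) * ((u e - y) + y) - y) * lam ((t, ω), e)
      = (Real.exp (-(α * (π : ℝ) * β ((t, ω), e))) * u e - y) * lam ((t, ω), e)
    ring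
  obtain ⟨C', hC'def⟩ : ∃ x : ℝ, x = α ^ 2 / 2 * (M * K) ^ 2 + α * M * K + α * M * K * K
    + cΦ * (1 + Klam) + Klam + 1 := ⟨_, rfl⟩
  have ht1 : (0:ℝ) ≤ α ^ 2 / 2 * (M * K) ^ 2 := mul_nonneg (by positivity) (sq_nonneg _)
  have ht2 : (0:ℝ) ≤ α * M * K := mul_nonneg (mul_nonneg hα.le hM0n) hK0n
  have ht3 : (0:ℝ) ≤ α * M * K * K := mul_nonneg ht2 hK0n
  have ht4 : (0:ℝ) ≤ cΦ * (1 + Klam) := mul_nonneg hcΦ.le (by linarith)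
  have ht5 : (0:ℝ) ≤ cΦ * Klam := mul_nonneg hcΦ.le hKlamn
  have hC'pos : 0 < C' := by rw [hC'def]; linarith
  have hC'1 : (1:ℝ) ≤ C' := by rw [hC'def]; linarith
  refine ⟨?_, ?_, ?_, ?_⟩
  · -- (HUQ1)
    intro t ω y u hu
    have heq : (fun z => tildeF C α σ ϑ β lam t ω y z u)
        = fun z => ⨅ π : C, ((-(α * (π : ℝ) * σ (t, ω))) * z
          + (α ^ 2 / 2 * ((π : ℝ) * σ (t, ω)) ^ 2 * y
            - α * (π : ℝ) * σ (t, ω) * (ϑ (t, ω) * y)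
            + ∫ e, (Real.exp (-(α * (π : ℝ) * β ((t, ω), e))) * (u e + y) - y)
                * lam ((t, ω), e) ∂(measE E))) := by
      funext z
      rw [htF]
      exact iInf_congr fun π => by ring
    rw [heq]
    refine concaveOn_ciInf_affine _ _ fun z => ?_
    have heq2 : (fun π : C => (-(α * (π : ℝ) * σ (t, ω))) * z
          + (α ^ 2 / 2 * ((π : ℝ) * σ (t, ω)) ^ 2 * y
            - α * (π : ℝ) * σ (t, ω) * (ϑ (t, ω) * y)
            + ∫ e, (Real.exp (-(α * (π : ℝ) * β ((t, ω), e))) * (u e + y) - y)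
                * lam ((t, ω), e) ∂(measE E)))
        = fun π : C =>
          α ^ 2 / 2 * ((π : ℝ) * σ (t, ω)) ^ 2 * y
            - α * (π : ℝ) * σ (t, ω) * (z + ϑ (t, ω) * y)
            + ∫ e, (Real.exp (-(α * (π : ℝ) * β ((t, ω), e))) * (u e + y) - y)
                * lam ((t, ω), e) ∂(measE E) := funext fun π => by ring
    rw [heq2]
    exact hBdd t ω y z u hu
  · -- (HUQ2)
    refine ⟨α ^ 2 / 2 * (M * K) ^ 2 + α * M * K * K + Klam, ?_⟩
    intro t ω z u hu y y'
    rw [htFs t ω y z u, htFs t ω y' z u]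
    refine abs_ciInf_sub_ciInf_le _ _ (hBdd' t ω y z u hu) (hBdd' t ω y' z u hu) fun π => ?_
    have hπ := hπM (π : ℝ) π.2
    have hc := hQ2 t ω (π : ℝ) hπ
    have hd := (generator_integral_shift (fun e => hlam0 _) (hlamint t ω) hu hcφ hcΦ
      ((hφb t ω (π : ℝ) hπ).1) ((hφb t ω (π : ℝ) hπ).2) y y').2
    have hsplit : (α ^ 2 / 2 * ((π : ℝ) * σ (t, ω)) ^ 2 * y
          - α * (π : ℝ) * σ (t, ω) * (z + ϑ (t, ω) * y)
          + ∫ e, (Real.exp (-(α * (π : ℝ) * β ((t, ω), e))) * u e - y)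
              * lam ((t, ω), e) ∂(measE E))
        - (α ^ 2 / 2 * ((π : ℝ) * σ (t, ω)) ^ 2 * y'
          - α * (π : ℝ) * σ (t, ω) * (z + ϑ (t, ω) * y')
          + ∫ e, (Real.exp (-(α * (π : ℝ) * β ((t, ω), e))) * u e - y')
              * lam ((t, ω), e) ∂(measE E))
        = (α ^ 2 / 2 * ((π : ℝ) * σ (t, ω)) ^ 2 - α * (π : ℝ) * σ (t, ω) * ϑ (t, ω)) * (y - y')
          + ((∫ e, (Real.exp (-(α * (π : ℝ) * β ((t, ω), e))) * u e - y)
              * lam ((t, ω), e) ∂(measE E))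
            - ∫ e, (Real.exp (-(α * (π : ℝ) * β ((t, ω), e))) * u e - y')
              * lam ((t, ω), e) ∂(measE E)) := by ring
    show |_| ≤ _
    rw [hsplit]
    have h5 : |(α ^ 2 / 2 * ((π : ℝ) * σ (t, ω)) ^ 2 - α * (π : ℝ) * σ (t, ω) * ϑ (t, ω))
          * (y - y')|
        ≤ (α ^ 2 / 2 * (M * K) ^ 2 + α * M * K * K) * |y - y'| := by
      rw [abs_mul]
      exact mul_le_mul_of_nonneg_right hc (abs_nonneg _)
    have h6 : |(∫ e, (Real.exp (-(α * (π : ℝ) * β ((t, ω), e))) * u e - y)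
            * lam ((t, ω), e) ∂(measE E))
          - ∫ e, (Real.exp (-(α * (π : ℝ) * β ((t, ω), e))) * u e - y')
            * lam ((t, ω), e) ∂(measE E)| ≤ |y - y'| * Klam :=
      hd.trans (mul_le_mul_of_nonneg_left (hΛK t ω) (abs_nonneg _))
    have htri := abs_add_le ((α ^ 2 / 2 * ((π : ℝ) * σ (t, ω)) ^ 2
        - α * (π : ℝ) * σ (t, ω) * ϑ (t, ω)) * (y - y'))
      ((∫ e, (Real.exp (-(α * (π : ℝ) * β ((t, ω), e))) * u e - y)
          * lam ((t, ω), e) ∂(measE E))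
        - ∫ e, (Real.exp (-(α * (π : ℝ) * β ((t, ω), e))) * u e - y')
          * lam ((t, ω), e) ∂(measE E))
    linarith [htri, h5, h6]
  · -- (HUQ3)
    refine ⟨C', hC'pos, ?_⟩
    intro t ω y z u hu
    have hJ0 : 0 ≤ ∫ e, |u e| * lam ((t, ω), e) ∂(measE E) :=
      integral_nonneg fun e => mul_nonneg (abs_nonneg _) (hlam0 _)
    have c1 : α ^ 2 / 2 * (M * K) ^ 2 + α * M * K * K + cΦ * Klam + Klam ≤ C' := by
      rw [hC'def]; linarith
    have c2 : α * M * K ≤ C' := by rw [hC'def]; linarith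
    have c3 : cΦ ≤ C' := by rw [hC'def]; linarith
    constructor
    · rw [htF]
      refine le_ciInf fun π => ?_
      refine le_trans ?_ (hGlb t ω y z u hu π)
      have e1 := mul_le_mul_of_nonneg_right c1 (abs_nonneg y)
      have e2 := mul_le_mul_of_nonneg_right c2 (abs_nonneg z)
      have e3 := mul_le_mul_of_nonneg_right c3 hJ0
      have e0 : (0:ℝ) ≤ C' := hC'pos.le
      nlinarith [e1, e2, e3, e0, hJ0]
    · have hval : (α ^ 2 / 2 * (((⟨0, h0C⟩ : C) : ℝ) * σ (t, ω)) ^ 2 * y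
          - α * ((⟨0, h0C⟩ : C) : ℝ) * σ (t, ω) * (z + ϑ (t, ω) * y)
          + ∫ e, (Real.exp (-(α * ((⟨0, h0C⟩ : C) : ℝ) * β ((t, ω), e))) * (u e + y) - y)
              * lam ((t, ω), e) ∂(measE E))
          = ∫ e, u e * lam ((t, ω), e) ∂(measE E) := by
        have hc0 : ((⟨0, h0C⟩ : C) : ℝ) = 0 := rfl
        rw [hc0]
        have h00 : (fun e => (Real.exp (-(α * (0:ℝ) * β ((t, ω), e))) * (u e + y) - y)
              * lam ((t, ω), e)) = fun e => u e * lam ((t, ω), e) := funext fun e => by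
          simp
        rw [h00]
        ring
      have hle : tildeF C α σ ϑ β lam t ω y z u ≤ ∫ e, u e * lam ((t, ω), e) ∂(measE E) := by
        rw [htF t ω y z u, ← hval]
        exact ciInf_le (hBdd t ω y z u hu) ⟨0, h0C⟩
      have hJle : (∫ e, u e * lam ((t, ω), e) ∂(measE E))
          ≤ ∫ e, |u e| * lam ((t, ω), e) ∂(measE E) := by
        have hnorm : (fun e => ‖u e * lam ((t, ω), e)‖)
            = fun e => |u e| * lam ((t, ω), e) := funext fun e => by
          rw [Real.norm_eq_abs, abs_mul, abs_of_nonneg (hlam0 _)]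
        calc (∫ e, u e * lam ((t, ω), e) ∂(measE E))
            ≤ |∫ e, u e * lam ((t, ω), e) ∂(measE E)| := le_abs_self _
          _ ≤ ∫ e, ‖u e * lam ((t, ω), e)‖ ∂(measE E) := by
              rw [← Real.norm_eq_abs]; exact norm_integral_le_integral_norm _
          _ = ∫ e, |u e| * lam ((t, ω), e) ∂(measE E) := by rw [hnorm]
      have h7 : 1 * (∫ e, |u e| * lam ((t, ω), e) ∂(measE E))
          ≤ C' * ∫ e, |u e| * lam ((t, ω), e) ∂(measE E) :=
        mul_le_mul_of_nonneg_right hC'1 hJ0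
      have h8 : 0 ≤ C' * |y| := mul_nonneg hC'pos.le (abs_nonneg y)
      have h9 : C' * (|y| + ∫ e, |u e| * lam ((t, ω), e) ∂(measE E))
          = C' * |y| + C' * ∫ e, |u e| * lam ((t, ω), e) ∂(measE E) := by ring
      linarith
  · -- (HUQ4)
    intro t ω hlt hle y z u hu
    have hτn : τ n ω < t := by
      rcases min_lt_iff.1 hlt with h | h
      · exact h
      · linarith
    have hl0 : ∀ e : ↥E, lam ((t, ω), e) = 0 := fun e => hlamτ t ω e hτn
    rw [htF, htF]
    refine iInf_congr fun π => ?_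
    congr 1
    refine integral_congr_ae (Filter.Eventually.of_forall fun e => ?_)
    simp [hl0 e]

end PaperBSDEJumps
end
end
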